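/- arXiv:0705.2439 — 5 statements merged into one kernel-verified Lean document; each statement's English description precedes it below -/
import Mathlib

section
/- For every n ≥ 2 and every k ∈ {1, 2, …, n−1}, there exists an injective positive edge-weight function on the complete graph G on n vertices such that |M_k(G)| = nk − k(k+1)/2. (Concretely: fix V′ ⊆ V with |V′| = k, partition the edges into E_0, E_1, E_2 according to whether they have 0, 1, or 2 endpoints in V′, and choose distinct positive weights so that every weight on E_2 is smaller than every weight on E_1, which in turn are smaller than every weight on E_0; then M_k(G) = E_2 ∪ E_1.) -/
/-- `IsSpanningTreeOn S T` : `T` is the edge set of a spanning tree of the complete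
graph on the vertex set `S`: all edges of `T` are non-loop edges with both endpoints
in `S`, all vertices of `S` are pairwise connected using edges of `T`, and
`|T| = |S| - 1`. -/
def IsSpanningTreeOn {V : Type*} [Fintype V] [DecidableEq V]
    (S : Finset V) (T : Finset (Sym2 V)) : Prop :=
  (∀ e ∈ T, ¬ e.IsDiag ∧ ∀ v ∈ e, v ∈ S) ∧
  (∀ u ∈ S, ∀ v ∈ S, (SimpleGraph.fromEdgeSet (↑T : Set (Sym2 V))).Reachable u v) ∧
  T.card + 1 = S.card

/-- The edge set of the (unique, since weights are injective) minimum spanning tree of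
the complete graph on the vertex set `S` with edge weights `w`: the set of edges
belonging to some minimum-weight spanning tree on `S`. -/
def mstEdges {V : Type*} [Fintype V] [DecidableEq V] (w : Sym2 V → ℝ) (S : Finset V) :
    Set (Sym2 V) :=
  {e | ∃ T : Finset (Sym2 V), IsSpanningTreeOn S T ∧
        (∀ T' : Finset (Sym2 V), IsSpanningTreeOn S T' → T.sum w ≤ T'.sum w) ∧ e ∈ T}

/-- `Mk w k` = `M_k(G)`: the union of the edge sets of the minimum spanning trees of all
induced subgraphs of the complete graph on `V` obtained by deleting `k - 1` vertices. -/
def Mk {V : Type*} [Fintype V] [DecidableEq V] (w : Sym2 V → ℝ) (k : ℕ) : Set (Sym2 V) :=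
  {e | ∃ X : Finset V, X.card = k - 1 ∧ e ∈ mstEdges w (Finset.univ \ X)}

/-- Two walks from `u` to `v` are internally disjoint if the only vertices they share
are `u` and `v`. -/
def InternallyDisjoint {V : Type*} {G : SimpleGraph V} {u v : V}
    (p q : G.Walk u v) : Prop :=
  ∀ x, x ∈ p.support → x ∈ q.support → x = u ∨ x = v

/-- `HasDisjointPaths G u v k` : `G` contains (at least) `k` pairwise internally
vertex-disjoint paths between `u` and `v`. -/
def HasDisjointPaths {V : Type*} (G : SimpleGraph V) (u v : V) (k : ℕ) : Prop :=
  ∃ P : Fin k → G.Walk u v, (∀ i, (P i).IsPath) ∧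
    Pairwise fun i j => InternallyDisjoint (P i) (P j)

/-- `IsConstructionOrder k G l` : the list `l` enumerates the edges of `G` without
repetition, and each edge joins two vertices between which the graph formed by the
previous edges has at most `k - 1` internally vertex-disjoint paths. -/
def IsConstructionOrder {V : Type*} [DecidableEq V] (k : ℕ) (G : SimpleGraph V)
    (l : List (Sym2 V)) : Prop :=
  l.Nodup ∧ (↑l.toFinset : Set (Sym2 V)) = G.edgeSet ∧
  ∀ (i : ℕ) (h : i < l.length) (u v : V), l.get ⟨i, h⟩ = s(u, v) →
    ¬ HasDisjointPaths (SimpleGraph.fromEdgeSet (↑(l.take i).toFinset)) u v k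

/-- A graph is `k`-constructible if it admits a `k`-construction order of its edges. -/
def IsKConstructible {V : Type*} [DecidableEq V] (k : ℕ) (G : SimpleGraph V) : Prop :=
  ∃ l : List (Sym2 V), IsConstructionOrder k G l

/-- A graph is `k`-(vertex-)connected: it has more than `k` vertices and deleting any
fewer than `k` vertices leaves a connected graph. -/
def IsKConnectedGraph {V : Type*} [Fintype V] [DecidableEq V]
    (k : ℕ) (G : SimpleGraph V) : Prop :=
  k < Fintype.card V ∧
  ∀ S : Finset V, S.card < k → (G.induce ((↑S : Set V)ᶜ)).Connected

/-- A graph is `k`-minimal if it is `k`-connected and deleting any single edge destroys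
`k`-connectivity. -/
def IsKMinimal {V : Type*} [Fintype V] [DecidableEq V]
    (k : ℕ) (G : SimpleGraph V) : Prop :=
  IsKConnectedGraph k G ∧ ∀ e ∈ G.edgeSet, ¬ IsKConnectedGraph k (G.deleteEdges {e})


namespace Stmt1Aux
set_option linter.unusedSectionVars false

variable {V : Type*} [Fintype V] [DecidableEq V]

noncomputable def iota : Sym2 V → ℕ := fun e => (Fintype.equivFin (Sym2 V) e : ℕ)

lemma iota_lt (e : Sym2 V) : iota e < Fintype.card (Sym2 V) := (Fintype.equivFin (Sym2 V) e).isLt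

lemma iota_inj {e f : Sym2 V} (h : iota e = iota f) : e = f :=
  (Fintype.equivFin (Sym2 V)).injective (Fin.val_injective h)

def cdeg (V' : Finset V) (e : Sym2 V) : ℕ :=
  (Finset.univ.filter (fun v => v ∈ e ∧ v ∉ V')).card

lemma cdeg_mk (V' : Finset V) (a b : V) (hab : a ≠ b) :
    cdeg V' s(a, b) = (if a ∈ V' then 0 else 1) + (if b ∈ V' then 0 else 1) := by
  unfold cdeg
  have h : (Finset.univ.filter (fun v => v ∈ s(a,b) ∧ v ∉ V'))
      = ({a, b} : Finset V).filter (fun v => v ∉ V') := by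
    ext v
    simp [Sym2.mem_iff]
  rw [h]
  by_cases ha : a ∈ V' <;> by_cases hb : b ∈ V' <;>
    simp [Finset.filter_insert, Finset.filter_singleton, ha, hb, hab]

lemma cdeg_le_two (V' : Finset V) (a b : V) (hab : a ≠ b) : cdeg V' s(a,b) ≤ 2 := by
  rw [cdeg_mk V' a b hab]; split_ifs <;> omega

def degT (T : Finset (Sym2 V)) (v : V) : ℕ := (T.filter (fun e => v ∈ e)).card

lemma sum_cdeg_eq (V' : Finset V) (T : Finset (Sym2 V)) :
    ∑ e ∈ T, cdeg V' e = ∑ v ∈ Finset.univ.filter (fun v => v ∉ V'), degT T v := by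
  calc ∑ e ∈ T, cdeg V' e
      = ∑ e ∈ T, ∑ v ∈ Finset.univ, (if v ∈ e ∧ v ∉ V' then 1 else 0) := by
        refine Finset.sum_congr rfl fun e _ => ?_
        rw [cdeg, Finset.card_filter]
    _ = ∑ v ∈ Finset.univ, ∑ e ∈ T, (if v ∈ e ∧ v ∉ V' then 1 else 0) := Finset.sum_comm
    _ = _ := by
        rw [Finset.sum_filter]
        refine Finset.sum_congr rfl fun v _ => ?_
        by_cases hv : v ∈ V'
        · simp [hv]
        · rw [if_pos hv, degT, Finset.card_filter]
          refine Finset.sum_congr rfl fun e _ => ?_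
          simp [hv]

lemma exists_edge_of_reachable {T : Finset (Sym2 V)} {u p : V} (hup : u ≠ p)
    (h : (SimpleGraph.fromEdgeSet (↑T : Set (Sym2 V))).Reachable u p) :
    ∃ e ∈ T, u ∈ e := by
  obtain ⟨w⟩ := h
  cases w with
  | nil => exact absurd rfl hup
  | @cons _ b _ h q =>
      rw [SimpleGraph.fromEdgeSet_adj] at h
      exact ⟨s(u, b), h.1, by simp⟩

lemma mem_of_walk_closed {G : SimpleGraph V} {C : Set V}
    (hC : ∀ a ∈ C, ∀ b, G.Adj a b → b ∈ C) {a b : V} (w : G.Walk a b) (ha : a ∈ C) : b ∈ C := by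
  induction w with
  | nil => exact ha
  | cons h _ ih => exact ih (hC _ ha _ h)

def starTree (S : Finset V) (p : V) : Finset (Sym2 V) := (S.erase p).image (fun x => s(p, x))

lemma star_spanning {S : Finset V} {p : V} (hp : p ∈ S) : IsSpanningTreeOn S (starTree S p) := by
  refine ⟨?_, ?_, ?_⟩
  · intro e he
    simp only [starTree, Finset.mem_image] at he
    obtain ⟨x, hx, rfl⟩ := he
    have hxp : x ≠ p := Finset.ne_of_mem_erase hx
    refine ⟨by simp [Sym2.mk_isDiag_iff, hxp.symm], ?_⟩
    intro v hv
    rw [Sym2.mem_iff] at hv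
    rcases hv with rfl | rfl
    · exact hp
    · exact Finset.mem_of_mem_erase hx
  · have key : ∀ u ∈ S, (SimpleGraph.fromEdgeSet (↑(starTree S p) : Set (Sym2 V))).Reachable u p := by
      intro u hu
      rcases eq_or_ne u p with rfl | hup
      · exact SimpleGraph.Reachable.refl _
      · refine SimpleGraph.Adj.reachable ?_
        rw [SimpleGraph.fromEdgeSet_adj]
        refine ⟨?_, hup⟩
        have hm : s(p, u) ∈ starTree S p :=
          Finset.mem_image_of_mem _ (Finset.mem_erase.mpr ⟨hup, hu⟩)
        rw [Finset.mem_coe, Sym2.eq_swap]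
        exact hm
    intro u hu v hv
    exact (key u hu).trans (key v hv).symm
  · rw [starTree, Finset.card_image_of_injOn, Finset.card_erase_of_mem hp]
    · have h1 : 1 ≤ S.card := Finset.card_pos.mpr ⟨p, hp⟩
      omega
    · intro x _ y _ h
      rwa [Sym2.congr_right] at h

lemma sum_cdeg_star {S : Finset V} {p : V} (hp : p ∈ S) {V' : Finset V} (hpV' : p ∈ V') :
    ∑ e ∈ starTree S p, cdeg V' e = (S.filter (fun v => v ∉ V')).card := by
  rw [starTree, Finset.sum_image (fun x _ y _ h => by rwa [Sym2.congr_right] at h)]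
  have h1 : ∀ x ∈ S.erase p, cdeg V' s(p, x) = if x ∉ V' then 1 else 0 := by
    intro x hx
    rw [cdeg_mk V' p x (Finset.ne_of_mem_erase hx).symm]
    · simp only [hpV', if_true]
      split_ifs <;> simp_all
  rw [Finset.sum_congr rfl h1, ← Finset.card_filter, Finset.filter_erase,
    Finset.erase_eq_of_notMem (by simp [hpV'])]

end Stmt1Aux

namespace Stmt1Aux
set_option linter.unusedSectionVars false
variable {V : Type*} [Fintype V] [DecidableEq V]

lemma sum_cdeg_ge {S : Finset V} {T : Finset (Sym2 V)} (hT : IsSpanningTreeOn S T)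
    {V' : Finset V} {p : V} (hp : p ∈ S) (hpV' : p ∈ V') :
    (S.filter (fun v => v ∉ V')).card ≤ ∑ e ∈ T, cdeg V' e := by
  rw [sum_cdeg_eq]
  have hsub : S.filter (fun v => v ∉ V') ⊆ Finset.univ.filter (fun v => v ∉ V') :=
    Finset.filter_subset_filter _ (Finset.subset_univ S)
  calc (S.filter fun v => v ∉ V').card
      = ∑ _v ∈ S.filter (fun v => v ∉ V'), 1 := by simp
    _ ≤ ∑ v ∈ S.filter (fun v => v ∉ V'), degT T v := by
        refine Finset.sum_le_sum fun v hv => ?_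
        simp only [Finset.mem_filter] at hv
        have hvp : v ≠ p := fun h => hv.2 (h ▸ hpV')
        obtain ⟨e, heT, hve⟩ := exists_edge_of_reachable hvp (hT.2.1 v hv.1 p hp)
        exact Finset.card_pos.mpr ⟨e, Finset.mem_filter.mpr ⟨heT, hve⟩⟩
    _ ≤ _ := Finset.sum_le_sum_of_subset hsub

lemma cdeg_le_one_of_min {S : Finset V} {T : Finset (Sym2 V)} (hT : IsSpanningTreeOn S T)
    {V' : Finset V} {p : V} (hp : p ∈ S) (hpV' : p ∈ V')
    (hsum : ∑ e ∈ T, cdeg V' e = (S.filter (fun v => v ∉ V')).card)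
    (e₀ : Sym2 V) (he₀ : e₀ ∈ T) : cdeg V' e₀ ≤ 1 := by
  obtain ⟨x, y, rfl⟩ : ∃ x y, e₀ = s(x, y) := by
    induction e₀ using Sym2.ind with
    | _ x y => exact ⟨x, y, rfl⟩
  obtain ⟨hnd, hmemS⟩ := hT.1 _ he₀
  have hxy : x ≠ y := by rwa [Sym2.mk_isDiag_iff] at hnd
  by_contra hc
  have h2 : cdeg V' s(x, y) = 2 := by
    have := cdeg_le_two V' x y hxy; omega
  have hxV' : x ∉ V' ∧ y ∉ V' := by
    rw [cdeg_mk V' x y hxy] at h2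
    split_ifs at h2 <;> simp_all
  have hxS : x ∈ S := hmemS x (by simp)
  have hyS : y ∈ S := hmemS y (by simp)
  -- every vertex of S \ V' has degree exactly 1 in T
  set A := S.filter (fun v => v ∉ V') with hA
  have hsum2 : ∑ v ∈ Finset.univ.filter (fun v => v ∉ V'), degT T v = A.card := by
    rw [← sum_cdeg_eq, hsum]
  have hdege : ∀ v ∈ A, 1 ≤ degT T v := by
    intro v hv
    simp only [hA, Finset.mem_filter] at hv
    have hvp : v ≠ p := fun h => hv.2 (h ▸ hpV')
    obtain ⟨e, heT, hve⟩ := exists_edge_of_reachable hvp (hT.2.1 v hv.1 p hp)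
    exact Finset.card_pos.mpr ⟨e, Finset.mem_filter.mpr ⟨heT, hve⟩⟩
  have hAle : ∑ v ∈ A, degT T v ≤ A.card := by
    rw [← hsum2]
    exact Finset.sum_le_sum_of_subset (Finset.filter_subset_filter _ (Finset.subset_univ S))
  have hdeg1 : ∀ v ∈ A, degT T v = 1 := by
    intro v hv
    by_contra hne
    have h2' : 2 ≤ degT T v := by have := hdege v hv; omega
    have : A.card < ∑ v ∈ A, degT T v := by
      calc A.card = ∑ _v ∈ A, 1 := by simp
        _ < ∑ v ∈ A, degT T v := Finset.sum_lt_sum hdege ⟨v, hv, by omega⟩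
    omega
  have hxA : x ∈ A := Finset.mem_filter.mpr ⟨hxS, hxV'.1⟩
  have hyA : y ∈ A := Finset.mem_filter.mpr ⟨hyS, hxV'.2⟩
  have hedge : ∀ v, v ∈ A → ∀ f ∈ T, v ∈ f → v ∈ s(x,y) → f = s(x, y) := by
    intro v hv f hf hvf hvxy
    have h1 : (T.filter (fun e => v ∈ e)).card = 1 := hdeg1 v hv
    obtain ⟨g, hg⟩ := Finset.card_eq_one.mp h1
    have hfm : f = g := by
      have : f ∈ T.filter (fun e => v ∈ e) := Finset.mem_filter.mpr ⟨hf, hvf⟩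
      rw [hg] at this; simpa using this
    have hxym : s(x,y) = g := by
      have : s(x,y) ∈ T.filter (fun e => v ∈ e) := Finset.mem_filter.mpr ⟨he₀, hvxy⟩
      rw [hg] at this; simpa using this
    rw [hfm, hxym]
  -- closure
  set C : Set V := {x, y} with hC
  have hclosed : ∀ a ∈ C, ∀ b, (SimpleGraph.fromEdgeSet (↑T : Set (Sym2 V))).Adj a b → b ∈ C := by
    intro a ha b hab
    rw [SimpleGraph.fromEdgeSet_adj] at hab
    obtain ⟨hmem', _⟩ := hab
    rw [Finset.mem_coe] at hmem'
    simp only [hC, Set.mem_insert_iff, Set.mem_singleton_iff] at ha ⊢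
    rcases ha with rfl | rfl
    · have h := hedge a hxA _ hmem' (by simp) (by simp)
      exact Or.inr (Sym2.congr_right.mp h)
    · have h := hedge a hyA _ hmem' (by simp) (by simp)
      rw [Sym2.eq_swap] at h
      exact Or.inl (Sym2.congr_left.mp h)
  obtain ⟨wk⟩ := hT.2.1 x hxS p hp
  have hpC : p ∈ C := mem_of_walk_closed hclosed wk (by simp [hC])
  rcases hpC with rfl | hpC
  · exact hxV'.1 hpV'
  · rw [Set.mem_singleton_iff] at hpC
    subst hpC
    exact hxV'.2 hpV'

end Stmt1Aux

namespace Stmt1Aux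
set_option linter.unusedSectionVars false
variable {V : Type*} [Fintype V] [DecidableEq V]

noncomputable def wnat (V' : Finset V) (e : Sym2 V) : ℕ :=
  cdeg V' e * (Fintype.card V * Fintype.card (Sym2 V)) + iota e + 1

noncomputable def wre (V' : Finset V) (e : Sym2 V) : ℝ := (wnat V' e : ℝ)

lemma sum_wre (V' : Finset V) (T : Finset (Sym2 V)) :
    T.sum (wre V') = ((∑ e ∈ T, wnat V' e : ℕ) : ℝ) := by
  rw [Nat.cast_sum]; rfl

lemma sum_wnat (V' : Finset V) (T : Finset (Sym2 V)) :
    ∑ e ∈ T, wnat V' e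
      = (∑ e ∈ T, cdeg V' e) * (Fintype.card V * Fintype.card (Sym2 V))
        + ∑ e ∈ T, (iota e + 1) := by
  rw [Finset.sum_mul, ← Finset.sum_add_distrib]
  exact Finset.sum_congr rfl (fun e _ => by unfold wnat; ring)

lemma min_char {S : Finset V} {T : Finset (Sym2 V)} {V' : Finset V} {p : V}
    (hp : p ∈ S) (hpV' : p ∈ V') (hT : IsSpanningTreeOn S T)
    (hmin : ∀ T', IsSpanningTreeOn S T' → T.sum (wre V') ≤ T'.sum (wre V')) :
    (∑ e ∈ T, cdeg V' e = (S.filter (fun v => v ∉ V')).card) ∧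
      ∀ e ∈ T, cdeg V' e ≤ 1 := by
  set n := Fintype.card V with hn
  set N := Fintype.card (Sym2 V) with hN
  have hNpos : 0 < N := by
    have : Nonempty (Sym2 V) := ⟨s(p, p)⟩
    exact Fintype.card_pos
  have hnpos : 0 < n := by
    have : Nonempty V := ⟨p⟩
    exact Fintype.card_pos
  have hstar := star_spanning (S := S) hp
  have hUB := hmin _ hstar
  rw [sum_wre, sum_wre] at hUB
  have hnat : ∑ e ∈ T, wnat V' e ≤ ∑ e ∈ starTree S p, wnat V' e := Nat.cast_le.mp hUB
  rw [sum_wnat, sum_wnat, sum_cdeg_star hp hpV'] at hnat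
  set out := (S.filter (fun v => v ∉ V')).card with hout
  have hι : ∑ e ∈ starTree S p, (iota e + 1) ≤ (n - 1) * N := by
    calc ∑ e ∈ starTree S p, (iota e + 1)
        ≤ (starTree S p).card * N := by
          rw [← smul_eq_mul]
          exact Finset.sum_le_card_nsmul _ _ N (fun e _ => by have := iota_lt e; omega)
      _ ≤ (n - 1) * N := by
          have h1 : (starTree S p).card + 1 = S.card := hstar.2.2
          have h2 : S.card ≤ n := Finset.card_le_univ S
          exact Nat.mul_le_mul_right N (by omega)
  have hTge := sum_cdeg_ge hT hp hpV'
  rw [← hout] at hTge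
  have hle : ∑ e ∈ T, cdeg V' e ≤ out := by
    by_contra hgt
    push_neg at hgt
    have h1 : (out + 1) * (n * N) ≤ (∑ e ∈ T, cdeg V' e) * (n * N) :=
      Nat.mul_le_mul_right _ (by omega)
    have h2 : (out + 1) * (n * N) ≤ out * (n * N) + (n - 1) * N := by
      calc (out + 1) * (n * N) ≤ (∑ e ∈ T, cdeg V' e) * (n * N) := h1
        _ ≤ (∑ e ∈ T, cdeg V' e) * (n * N) + ∑ e ∈ T, (iota e + 1) := Nat.le_add_right _ _
        _ ≤ out * (n * N) + ∑ e ∈ starTree S p, (iota e + 1) := hnat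
        _ ≤ out * (n * N) + (n - 1) * N := Nat.add_le_add_left hι _
    rw [add_mul, one_mul] at h2
    have h3 : n * N ≤ (n - 1) * N := Nat.le_of_add_le_add_left h2
    have h4 : n ≤ n - 1 := Nat.le_of_mul_le_mul_right h3 hNpos
    omega
  have heq : ∑ e ∈ T, cdeg V' e = out := le_antisymm hle hTge
  exact ⟨heq, fun e he => cdeg_le_one_of_min hT hp hpV' heq e he⟩

lemma exists_min_tree {S : Finset V} {p : V} (hp : p ∈ S) (V' : Finset V) :
    ∃ T, IsSpanningTreeOn S T ∧
      ∀ T', IsSpanningTreeOn S T' → T.sum (wre V') ≤ T'.sum (wre V') := by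
  obtain ⟨T, hT, hmin⟩ := Set.exists_min_image {T | IsSpanningTreeOn S T}
    (fun T => T.sum (wre V')) (Set.toFinite _) ⟨starTree S p, star_spanning hp⟩
  exact ⟨T, hT, fun T' hT' => hmin T' hT'⟩

end Stmt1Aux

namespace Stmt1Aux
set_option linter.unusedSectionVars false
variable {V : Type*} [Fintype V] [DecidableEq V]

lemma mem_image_offDiag {s : Finset V} {a b : V} (hab : a ≠ b) :
    s(a, b) ∈ s.offDiag.image (Function.uncurry Sym2.mk) ↔ a ∈ s ∧ b ∈ s := by
  simp only [Finset.mem_image, Finset.mem_offDiag, Prod.exists, Function.uncurry_apply_pair]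
  constructor
  · rintro ⟨x, y, ⟨hx, hy, _⟩, hxy⟩
    rw [Sym2.eq_iff] at hxy
    rcases hxy with ⟨rfl, rfl⟩ | ⟨rfl, rfl⟩
    · exact ⟨hx, hy⟩
    · exact ⟨hy, hx⟩
  · rintro ⟨ha, hb⟩
    exact ⟨a, b, ⟨ha, hb, hab⟩, rfl⟩

lemma mem_univ_image_offDiag {e : Sym2 V} :
    e ∈ (Finset.univ : Finset V).offDiag.image (Function.uncurry Sym2.mk) ↔ ¬ e.IsDiag := by
  induction e using Sym2.ind with
  | _ a b =>
    rw [Sym2.mk_isDiag_iff]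
    constructor
    · intro h
      simp only [Finset.mem_image, Finset.mem_offDiag, Prod.exists, Function.uncurry_apply_pair] at h
      obtain ⟨x, y, ⟨_, _, hxy⟩, h⟩ := h
      rw [Sym2.eq_iff] at h
      rcases h with ⟨rfl, rfl⟩ | ⟨rfl, rfl⟩
      · exact hxy
      · exact hxy.symm
    · intro h
      exact (mem_image_offDiag h).mpr ⟨Finset.mem_univ a, Finset.mem_univ b⟩

-- Case 1: u ∈ V', v ∉ V'
lemma mem_Mk_case1 {V' : Finset V} {u v : V} (hu : u ∈ V') (hv : v ∉ V') (huv : u ≠ v)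
    {k : ℕ} (hcard : V'.card = k) :
    s(u, v) ∈ Mk (wre V') k := by
  set X := V'.erase u with hX
  set S := (Finset.univ : Finset V) \ X with hS
  have huS : u ∈ S := by
    simp [hS, hX]
  have hvS : v ∈ S := by
    simp only [hS, Finset.mem_sdiff, Finset.mem_univ, true_and, hX]
    intro h
    exact hv (Finset.mem_of_mem_erase h)
  have hSV : ∀ z ∈ S, z ∈ V' → z = u := by
    intro z hz hzV'
    simp only [hS, Finset.mem_sdiff, hX, Finset.mem_erase] at hz
    by_contra hne
    exact hz.2 ⟨hne, hzV'⟩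
  obtain ⟨T, hT, hmin⟩ := exists_min_tree huS V'
  have hchar := min_char huS hu hT hmin
  -- T = starTree S u
  have hsub : T ⊆ starTree S u := by
    intro f hf
    obtain ⟨a, b, rfl⟩ : ∃ a b, f = s(a, b) := by
      induction f using Sym2.ind with
      | _ a b => exact ⟨a, b, rfl⟩
    obtain ⟨hnd, hmemS⟩ := hT.1 _ hf
    have hab : a ≠ b := by rwa [Sym2.mk_isDiag_iff] at hnd
    have haS : a ∈ S := hmemS a (by simp)
    have hbS : b ∈ S := hmemS b (by simp)
    have hc1 := hchar.2 _ hf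
    rw [cdeg_mk V' a b hab] at hc1
    have htouch : a ∈ V' ∨ b ∈ V' := by
      by_contra h
      push_neg at h
      rw [if_neg h.1, if_neg h.2] at hc1
      omega
    rcases htouch with haV | hbV
    · have : a = u := hSV a haS haV
      subst this
      exact Finset.mem_image_of_mem _ (Finset.mem_erase.mpr ⟨hab.symm, hbS⟩)
    · have : b = u := hSV b hbS hbV
      subst this
      rw [Sym2.eq_swap]
      exact Finset.mem_image_of_mem _ (Finset.mem_erase.mpr ⟨hab, haS⟩)
  have hTeq : T = starTree S u := by
    refine Finset.eq_of_subset_of_card_le hsub ?_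
    have h1 := hT.2.2
    have h2 := (star_spanning huS).2.2
    omega
  refine ⟨X, ?_, T, hT, hmin, ?_⟩
  · rw [hX, Finset.card_erase_of_mem hu, hcard]
  · rw [hTeq]
    exact Finset.mem_image_of_mem _ (Finset.mem_erase.mpr ⟨huv.symm, hvS⟩)

end Stmt1Aux

namespace Stmt1Aux
set_option linter.unusedSectionVars false
variable {V : Type*} [Fintype V] [DecidableEq V]

-- Case 2: u, v ∈ V'
lemma mem_Mk_case2 {V' : Finset V} {u v : V} (hu : u ∈ V') (hv : v ∈ V') (huv : u ≠ v)
    {k : ℕ} (hcard : V'.card = k) (hlt : V'.card < Fintype.card V) :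
    s(u, v) ∈ Mk (wre V') k := by
  obtain ⟨q, hq⟩ : ∃ q, q ∉ V' := by
    by_contra h
    push_neg at h
    have : (Finset.univ : Finset V) ⊆ V' := fun z _ => h z
    have := Finset.card_le_card this
    rw [Finset.card_univ] at this
    omega
  set X := insert q ((V'.erase u).erase v) with hX
  have hqmem : q ∉ (V'.erase u).erase v := fun h =>
    hq (Finset.mem_of_mem_erase (Finset.mem_of_mem_erase h))
  have hk2 : 2 ≤ k := by
    rw [← hcard]
    exact Finset.one_lt_card.mpr ⟨u, hu, v, hv, huv⟩
  have hXcard : X.card = k - 1 := by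
    rw [hX, Finset.card_insert_of_notMem hqmem, Finset.card_erase_of_mem
      (Finset.mem_erase.mpr ⟨(Ne.symm huv), hv⟩), Finset.card_erase_of_mem hu, hcard]
    omega
  set S := (Finset.univ : Finset V) \ X with hS
  have hmemS : ∀ z, z ∈ S ↔ z ∉ X := by
    intro z; simp [hS]
  have huS : u ∈ S := by
    rw [hmemS, hX]
    simp only [Finset.mem_insert, Finset.mem_erase]
    rintro (rfl | ⟨_, h, _⟩)
    · exact hq hu
    · exact h rfl
  have hvS : v ∈ S := by
    rw [hmemS, hX]
    simp only [Finset.mem_insert, Finset.mem_erase]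
    rintro (rfl | ⟨h, _⟩)
    · exact hq hv
    · exact h rfl
  have hSV : ∀ z ∈ S, z ∈ V' → z = u ∨ z = v := by
    intro z hz hzV'
    rw [hmemS, hX] at hz
    simp only [Finset.mem_insert, Finset.mem_erase] at hz
    push_neg at hz
    by_contra hne
    push_neg at hne
    exact absurd (hz.2 hne.2 hne.1) (fun h => h hzV')
  obtain ⟨T, hT, hmin⟩ := exists_min_tree huS V'
  have hchar := min_char huS hu hT hmin
  set out := (S.filter (fun z => z ∉ V')).card with hout
  -- S.card = 2 + out
  have hfilter_in : S.filter (fun z => z ∈ V') = {u, v} := by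
    ext z
    simp only [Finset.mem_filter, Finset.mem_insert, Finset.mem_singleton]
    constructor
    · rintro ⟨hz, hzV'⟩
      exact hSV z hz hzV'
    · rintro (rfl | rfl)
      · exact ⟨huS, hu⟩
      · exact ⟨hvS, hv⟩
  have hScard : S.card = 2 + out := by
    have := Finset.card_filter_add_card_filter_not
      (s := S) (p := fun z => z ∈ V')
    rw [hfilter_in] at this
    have h2 : ({u, v} : Finset V).card = 2 := Finset.card_pair huv
    rw [h2] at this
    rw [hout]
    omega
  -- number of cdeg-nonzero edges in T is out
  have hone : ∀ e ∈ T.filter (fun e => cdeg V' e ≠ 0), cdeg V' e = 1 := by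
    intro e he
    rw [Finset.mem_filter] at he
    have := hchar.2 e he.1
    omega
  have hsum_split : ∑ e ∈ T, cdeg V' e = (T.filter (fun e => cdeg V' e ≠ 0)).card := by
    rw [← Finset.sum_filter_add_sum_filter_not T (fun e => cdeg V' e ≠ 0)]
    rw [Finset.sum_congr rfl hone]
    have hzero : ∑ e ∈ T.filter (fun e => ¬ cdeg V' e ≠ 0), cdeg V' e = 0 := by
      refine Finset.sum_eq_zero fun e he => ?_
      rw [Finset.mem_filter] at he
      omega
    rw [hzero]
    simp
  have hcardT : T.card = out + 1 := by
    have := hT.2.2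
    omega
  have hsplitT := Finset.card_filter_add_card_filter_not
    (s := T) (p := fun e => cdeg V' e ≠ 0)
  have hz1 : (T.filter (fun e => ¬ cdeg V' e ≠ 0)).card = 1 := by
    have h := hchar.1
    rw [hsum_split] at h
    omega
  obtain ⟨f, hf⟩ := Finset.card_eq_one.mp hz1
  have hfT : f ∈ T ∧ cdeg V' f = 0 := by
    have hm : f ∈ T.filter (fun e => ¬ cdeg V' e ≠ 0) := by rw [hf]; simp
    rw [Finset.mem_filter] at hm
    exact ⟨hm.1, by omega⟩
  obtain ⟨a, b, rfl⟩ : ∃ a b, f = s(a, b) := by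
    induction f using Sym2.ind with
    | _ a b => exact ⟨a, b, rfl⟩
  obtain ⟨hnd, hmemSf⟩ := hT.1 _ hfT.1
  have hab : a ≠ b := by rwa [Sym2.mk_isDiag_iff] at hnd
  have haS : a ∈ S := hmemSf a (by simp)
  have hbS : b ∈ S := hmemSf b (by simp)
  have h0 := hfT.2
  rw [cdeg_mk V' a b hab] at h0
  have haV : a ∈ V' := by by_contra h; rw [if_neg h] at h0; omega
  have hbV : b ∈ V' := by by_contra h; rw [if_neg h] at h0; omega
  have heq : s(a, b) = s(u, v) := by
    rcases hSV a haS haV with rfl | rfl <;> rcases hSV b hbS hbV with rfl | rfl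
    · exact absurd rfl hab
    · rfl
    · exact Sym2.eq_swap
    · exact absurd rfl hab
  refine ⟨X, hXcard, T, hT, hmin, ?_⟩
  rw [← heq]
  exact hfT.1

end Stmt1Aux

namespace Stmt1Aux
set_option linter.unusedSectionVars false
variable {V : Type*} [Fintype V] [DecidableEq V]

lemma cdeg_le_two_all (V' : Finset V) (e : Sym2 V) : cdeg V' e ≤ 2 := by
  induction e using Sym2.ind with
  | _ a b =>
    unfold cdeg
    calc (Finset.univ.filter (fun v => v ∈ s(a,b) ∧ v ∉ V')).card
        ≤ ({a, b} : Finset V).card := by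
          refine Finset.card_le_card ?_
          intro v hv
          simp only [Finset.mem_filter, Sym2.mem_iff] at hv
          simp only [Finset.mem_insert, Finset.mem_singleton]
          tauto
      _ ≤ 2 := by
          calc ({a, b} : Finset V).card ≤ ({b} : Finset V).card + 1 := Finset.card_insert_le _ _
            _ ≤ 2 := by simp

lemma inj_aux {c1 c2 i1 i2 B : ℕ} (h1 : c1 ≤ 2) (h2 : c2 ≤ 2) (hi1 : i1 < B) (hi2 : i2 < B)
    (h : c1 * B + i1 = c2 * B + i2) : i1 = i2 := by
  interval_cases c1 <;> interval_cases c2 <;> omega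

lemma wre_inj {V' : Finset V} (hn : 0 < Fintype.card V) {e f : Sym2 V}
    (h : wre V' e = wre V' f) : e = f := by
  have hnat : wnat V' e = wnat V' f := Nat.cast_injective h
  unfold wnat at hnat
  have hB : Fintype.card (Sym2 V) ≤ Fintype.card V * Fintype.card (Sym2 V) :=
    Nat.le_mul_of_pos_left _ hn
  refine iota_inj (inj_aux (cdeg_le_two_all V' e) (cdeg_le_two_all V' f)
    (lt_of_lt_of_le (iota_lt e) hB) (lt_of_lt_of_le (iota_lt f) hB) (by omega))

lemma Mk_eq {V' : Finset V} {k : ℕ} (hcard : V'.card = k) (hk1 : 1 ≤ k)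
    (hlt : V'.card < Fintype.card V) :
    Mk (wre V') k
      = ↑(((Finset.univ : Finset V).offDiag.image (Function.uncurry Sym2.mk)) \ ((V'ᶜ).offDiag.image (Function.uncurry Sym2.mk))) := by
  ext e
  obtain ⟨a, b, rfl⟩ : ∃ a b, e = s(a, b) := by
    induction e using Sym2.ind with
    | _ a b => exact ⟨a, b, rfl⟩
  simp only [Finset.coe_sdiff, Set.mem_diff, Finset.mem_coe]
  constructor
  · rintro ⟨X, hXcard, T, hT, hmin, heT⟩
    obtain ⟨hnd, hmemS⟩ := hT.1 _ heT
    have hab : a ≠ b := by rwa [Sym2.mk_isDiag_iff] at hnd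
    have h1 : 1 ≤ (V' \ X).card := by
      have h2 := Finset.le_card_sdiff X V'
      omega
    obtain ⟨p, hp⟩ := Finset.card_pos.mp (show 0 < (V' \ X).card by omega)
    obtain ⟨hpV, hpX⟩ := Finset.mem_sdiff.mp hp
    have hpS : p ∈ (Finset.univ : Finset V) \ X := Finset.mem_sdiff.mpr ⟨Finset.mem_univ p, hpX⟩
    have hc1 := (min_char hpS hpV hT hmin).2 _ heT
    rw [cdeg_mk V' a b hab] at hc1
    refine ⟨mem_univ_image_offDiag.mpr hnd, fun hsm => ?_⟩
    obtain ⟨ha, hb⟩ := (mem_image_offDiag hab).mp hsm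
    rw [Finset.mem_compl] at ha hb
    rw [if_neg ha, if_neg hb] at hc1
    omega
  · rintro ⟨hbig, hsmall⟩
    have hnd := mem_univ_image_offDiag.mp hbig
    have hab : a ≠ b := by rwa [Sym2.mk_isDiag_iff] at hnd
    have htouch : a ∈ V' ∨ b ∈ V' := by
      by_contra h
      push_neg at h
      exact hsmall ((mem_image_offDiag hab).mpr
        ⟨Finset.mem_compl.mpr h.1, Finset.mem_compl.mpr h.2⟩)
    by_cases ha : a ∈ V' <;> by_cases hb : b ∈ V'
    · exact mem_Mk_case2 ha hb hab hcard hlt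
    · exact mem_Mk_case1 ha hb hab hcard
    · rw [Sym2.eq_swap]
      exact mem_Mk_case1 hb ha hab.symm hcard
    · tauto

lemma count_F (V' : Finset V) :
    ((((Finset.univ : Finset V).offDiag.image (Function.uncurry Sym2.mk)) \ ((V'ᶜ).offDiag.image (Function.uncurry Sym2.mk))).card)
      = (Fintype.card V).choose 2 - (Fintype.card V - V'.card).choose 2 := by
  have hsub : ((V'ᶜ).offDiag.image (Function.uncurry Sym2.mk))
      ⊆ (Finset.univ : Finset V).offDiag.image (Function.uncurry Sym2.mk) := by
    refine Finset.image_subset_image ?_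
    intro p hp
    rw [Finset.mem_offDiag] at hp ⊢
    exact ⟨Finset.mem_univ _, Finset.mem_univ _, hp.2.2⟩
  rw [Finset.card_sdiff_of_subset hsub, Sym2.card_image_offDiag, Sym2.card_image_offDiag,
    Finset.card_compl, Finset.card_univ]

lemma count_arith {n k : ℕ} (h2 : 2 ≤ n) (hk1 : 1 ≤ k) (hk2 : k ≤ n - 1) :
    n.choose 2 - (n - k).choose 2 = n * k - k * (k + 1) / 2 := by
  obtain ⟨j, rfl⟩ : ∃ j, k = j + 1 := ⟨k - 1, by omega⟩
  obtain ⟨i, rfl⟩ : ∃ i, n = i + j + 2 := ⟨n - j - 2, by omega⟩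
  rw [Nat.choose_two_right, Nat.choose_two_right]
  have e1 : i + j + 2 - (j + 1) = i + 1 := by omega
  have e2 : i + j + 2 - 1 = i + j + 1 := by omega
  have e3 : i + 1 - 1 = i := by omega
  rw [e1, e2, e3]
  have half : ∀ m : ℕ, ∃ a, m * (m + 1) = 2 * a := by
    intro m
    obtain ⟨a, ha⟩ := Nat.even_mul_succ_self m
    exact ⟨a, by omega⟩
  obtain ⟨a, ha⟩ := half (i + j + 1)
  have ha' : (i + j + 2) * (i + j + 1) = 2 * a := by rw [← ha]; ring
  obtain ⟨c, hc⟩ := half i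
  have hc' : (i + 1) * i = 2 * c := by rw [← hc]; ring
  obtain ⟨d, hd'⟩ := half (j + 1)
  rw [ha', hc', hd']
  rw [Nat.mul_div_cancel_left a two_pos, Nat.mul_div_cancel_left c two_pos,
    Nat.mul_div_cancel_left d two_pos]
  have hrel : 2 * a + 2 * d = 2 * c + 2 * ((i + j + 2) * (j + 1)) := by
    rw [← ha', ← hc', ← hd']
    ring
  have hdle : 2 * d ≤ 2 * ((i + j + 2) * (j + 1)) := by
    rw [← hd']
    calc (j + 1) * (j + 1 + 1) ≤ (j + 1) * (2 * (i + j + 2)) :=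
          Nat.mul_le_mul_left (j + 1) (by omega)
      _ = 2 * ((i + j + 2) * (j + 1)) := by ring
  have key : ∀ A C D P : ℕ, 2 * A + 2 * D = 2 * C + 2 * P → 2 * D ≤ 2 * P → A - C = P - D := by
    intro A C D P hh1 hh2
    omega
  exact key _ _ _ _ hrel hdle

end Stmt1Aux

/-- the bound `nk - k(k+1)/2` is tight: for every `n ≥ 2` and
`k ∈ {1, …, n-1}` there are injective positive edge weights with
`|M_k(G)| = nk - k(k+1)/2`. -/
theorem stmt_1 {V : Type*} [Fintype V] [DecidableEq V]
    (hn : 2 ≤ Fintype.card V) (k : ℕ) (hk1 : 1 ≤ k) (hk2 : k ≤ Fintype.card V - 1) :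
    ∃ w : Sym2 V → ℝ,
      (∀ e : Sym2 V, ¬ e.IsDiag → 0 < w e) ∧
      (∀ e f : Sym2 V, ¬ e.IsDiag → ¬ f.IsDiag → w e = w f → e = f) ∧
      (Mk w k).ncard = Fintype.card V * k - k * (k + 1) / 2 := by
  obtain ⟨V', hVsub, hVcard⟩ := Finset.exists_subset_card_eq
    (show k ≤ (Finset.univ : Finset V).card by rw [Finset.card_univ]; omega)
  refine ⟨Stmt1Aux.wre V', ?_, ?_, ?_⟩
  · intro e _
    exact Nat.cast_pos.mpr (show 0 < Stmt1Aux.wnat V' e by unfold Stmt1Aux.wnat; omega)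
  · intro e f _ _ h
    exact Stmt1Aux.wre_inj (by omega) h
  · have hlt : V'.card < Fintype.card V := by omega
    rw [Stmt1Aux.Mk_eq hVcard hk1 hlt, Set.ncard_coe_finset, Stmt1Aux.count_F, hVcard]
    exact Stmt1Aux.count_arith hn hk1 hk2
end

section
/- Let G be a complete graph on n ≥ 3 vertices with distinct positive edge weights, let v be a leaf of the minimum spanning tree MST(G), and let u be the unique neighbor of v in MST(G). Then the minimum spanning tree of the induced subgraph G[V∖{v}] equals MST(G) with the edge {u, v} removed, i.e., MST(G[V∖{v}]) = MST(G) ∖ {{u, v}}. -/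
section Aux
open SimpleGraph

private lemma exists_edge_at {V : Type*} {T : Finset (Sym2 V)} {v u : V}
    (h : (fromEdgeSet (↑T : Set (Sym2 V))).Reachable v u) (hne : v ≠ u) :
    ∃ e ∈ T, v ∈ e := by
  obtain ⟨p⟩ := h
  cases p with
  | nil => exact absurd rfl hne
  | cons h' p' =>
    rw [fromEdgeSet_adj] at h'
    exact ⟨_, h'.1, by simp⟩

private lemma reach_erase {V : Type*} [DecidableEq V] {T : Finset (Sym2 V)} {u v x y : V}
    (hleaf : ∀ e ∈ T, v ∈ e → e = s(u, v)) (hne : u ≠ v)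
    (hx : x ≠ v) (hy : y ≠ v)
    (h : (fromEdgeSet (↑T : Set (Sym2 V))).Reachable x y) :
    (fromEdgeSet (↑(T.erase s(u, v)) : Set (Sym2 V))).Reachable x y := by
  obtain ⟨p0⟩ := h
  obtain ⟨q, hq⟩ : ∃ q : (fromEdgeSet (↑T : Set (Sym2 V))).Walk x y, q.IsPath :=
    ⟨p0.toPath, p0.toPath.2⟩
  have hv : v ∉ q.support := by
    intro hv
    have spec := q.take_spec hv
    set p1 := q.takeUntil v hv with hp1def
    set p2 := q.dropUntil v hv with hp2def
    have h2 : ¬ p2.Nil := Walk.not_nil_of_ne (fun h => hy h.symm)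
    obtain ⟨b, hb, p2', hp2⟩ := Walk.not_nil_iff.mp h2
    rw [fromEdgeSet_adj] at hb
    have hbu : b = u := by
      have := hleaf _ hb.1 (by simp)
      rw [Sym2.eq_iff] at this
      rcases this with ⟨h1, _⟩ | ⟨_, h1⟩
      · exact absurd h1.symm hne
      · exact h1
    have h1n : ¬ p1.reverse.Nil := Walk.not_nil_of_ne (fun h => hx h.symm)
    obtain ⟨c, hc, p1', hp1⟩ := Walk.not_nil_iff.mp h1n
    rw [fromEdgeSet_adj] at hc
    have hcu : c = u := by
      have := hleaf _ hc.1 (by simp)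
      rw [Sym2.eq_iff] at this
      rcases this with ⟨h1, _⟩ | ⟨_, h1⟩
      · exact absurd h1.symm hne
      · exact h1
    have hu1 : u ∈ p1.support := by
      have h' : u ∈ p1.reverse.support := by
        rw [hp1, Walk.support_cons]
        exact List.mem_cons_of_mem _ (hcu ▸ p1'.start_mem_support)
      rwa [Walk.support_reverse, List.mem_reverse] at h'
    have hu2 : u ∈ p2.support.tail := by
      rw [hp2, Walk.support_cons]
      exact hbu ▸ p2'.start_mem_support
    have hnd : (p1.support ++ p2.support.tail).Nodup := by
      have := hq.support_nodup
      rwa [← spec, Walk.support_append] at this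
    exact (List.nodup_append.mp hnd).2.2 _ hu1 _ hu2 rfl
  refine ⟨q.transfer _ ?_⟩
  intro e he
  have heT := q.edges_subset_edgeSet he
  rw [edgeSet_fromEdgeSet] at heT ⊢
  refine ⟨Finset.mem_coe.mpr (Finset.mem_erase.mpr ⟨?_, Finset.mem_coe.mp heT.1⟩), heT.2⟩
  intro heq
  have : s(v, u) ∈ q.edges := by rwa [show s(v,u) = s(u,v) from Sym2.eq_swap, ← heq]
  exact hv (q.fst_mem_support_of_mem_edges this)

private lemma erase_spanning {V : Type*} [Fintype V] [DecidableEq V] {T : Finset (Sym2 V)}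
    {u v : V} (hST : IsSpanningTreeOn Finset.univ T) (huvT : s(u, v) ∈ T)
    (hleaf : ∀ e ∈ T, v ∈ e → e = s(u, v)) :
    IsSpanningTreeOn (Finset.univ \ {v}) (T.erase s(u, v)) := by
  obtain ⟨hE, hR, hC⟩ := hST
  have hne : u ≠ v := fun h => (hE _ huvT).1 (by rw [h]; exact Sym2.mk_isDiag_iff.mpr rfl)
  refine ⟨?_, ?_, ?_⟩
  · intro e he
    have he' := Finset.mem_of_mem_erase he
    refine ⟨(hE e he').1, fun x hx => ?_⟩
    simp only [Finset.mem_sdiff, Finset.mem_univ, Finset.mem_singleton, true_and]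
    intro hxv
    exact (Finset.ne_of_mem_erase he) (hleaf e he' (hxv ▸ hx))
  · intro a ha b hb
    simp only [Finset.mem_sdiff, Finset.mem_singleton] at ha hb
    exact reach_erase hleaf hne ha.2 hb.2 (hR a (Finset.mem_univ a) b (Finset.mem_univ b))
  · have h1 : (Finset.univ \ {v} : Finset V).card = (Finset.univ : Finset V).card - 1 := by
      rw [Finset.card_sdiff_of_subset (Finset.subset_univ ({v} : Finset V)), Finset.card_singleton]
    have h2 : 1 ≤ T.card := Finset.card_pos.mpr ⟨_, huvT⟩
    rw [Finset.card_erase_of_mem huvT, h1]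
    omega

private lemma insert_spanning {V : Type*} [Fintype V] [DecidableEq V] {T : Finset (Sym2 V)}
    {u v : V} (hne : u ≠ v) (hST : IsSpanningTreeOn (Finset.univ \ {v}) T) :
    IsSpanningTreeOn Finset.univ (insert s(u, v) T) := by
  obtain ⟨hE, hR, hC⟩ := hST
  have hnotmem : s(u, v) ∉ T := fun h => by
    have := (hE _ h).2 v (by simp)
    simp at this
  have hmono : fromEdgeSet (↑T : Set (Sym2 V)) ≤
      fromEdgeSet (↑(insert s(u, v) T) : Set (Sym2 V)) := by
    apply fromEdgeSet_mono
    rw [Finset.coe_insert]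
    exact Set.subset_insert _ _
  have hadj : (fromEdgeSet (↑(insert s(u, v) T) : Set (Sym2 V))).Adj v u := by
    rw [fromEdgeSet_adj]
    exact ⟨by rw [show s(v,u) = s(u,v) from Sym2.eq_swap]; simp, fun h => hne h.symm⟩
  have key : ∀ a : V, (fromEdgeSet (↑(insert s(u, v) T) : Set (Sym2 V))).Reachable a u := by
    intro a
    by_cases hav : a = v
    · exact hav ▸ hadj.reachable
    · exact (hR a (by simp [hav]) u (by simp [hne])).mono hmono
  refine ⟨?_, ?_, ?_⟩
  · intro e he
    rcases Finset.mem_insert.mp he with h | h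
    · exact ⟨h ▸ fun hd => hne (Sym2.mk_isDiag_iff.mp hd), fun x _ => Finset.mem_univ x⟩
    · exact ⟨(hE e h).1, fun x _ => Finset.mem_univ x⟩
  · exact fun a _ b _ => (key a).trans (key b).symm
  · have h1 : (Finset.univ \ {v} : Finset V).card = (Finset.univ : Finset V).card - 1 := by
      rw [Finset.card_sdiff_of_subset (Finset.subset_univ ({v} : Finset V)), Finset.card_singleton]
    have h2 : 1 ≤ (Finset.univ : Finset V).card := Finset.card_pos.mpr ⟨v, Finset.mem_univ v⟩
    rw [Finset.card_insert_of_notMem hnotmem]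
    omega

end Aux

/-- if `v` is a leaf of `MST(G)` (exactly one MST edge contains `v`)
with unique neighbor `u` (so `{u,v} ∈ MST(G)`), and `n ≥ 3`, then
`MST(G[V ∖ {v}]) = MST(G) ∖ {{u,v}}`. -/



theorem stmt_4 {V : Type*} [Fintype V] [DecidableEq V] (w : Sym2 V → ℝ)
    (hpos : ∀ e : Sym2 V, ¬ e.IsDiag → 0 < w e)
    (hinj : ∀ e f : Sym2 V, ¬ e.IsDiag → ¬ f.IsDiag → w e = w f → e = f)
    (hn : 3 ≤ Fintype.card V) (u v : V) (huv : u ≠ v)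
    (hleaf : {e ∈ mstEdges w Finset.univ | v ∈ e}.ncard = 1)
    (hedge : s(u, v) ∈ mstEdges w Finset.univ) :
    mstEdges w (Finset.univ \ {v}) = mstEdges w Finset.univ \ {s(u, v)} := by
  have hleafP : ∀ e ∈ mstEdges w Finset.univ, v ∈ e → e = s(u, v) := by
    obtain ⟨a, ha⟩ := Set.ncard_eq_one.mp hleaf
    have hua : s(u, v) = a := by
      have : s(u, v) ∈ {e ∈ mstEdges w Finset.univ | v ∈ e} := ⟨hedge, by simp⟩
      rwa [ha, Set.mem_singleton_iff] at this
    intro e he hve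
    have hmem : e ∈ {e ∈ mstEdges w Finset.univ | v ∈ e} := ⟨he, hve⟩
    rw [ha, Set.mem_singleton_iff] at hmem
    rw [hmem, ← hua]
  have treeLeaf : ∀ T : Finset (Sym2 V), IsSpanningTreeOn Finset.univ T →
      (∀ T', IsSpanningTreeOn Finset.univ T' → T.sum w ≤ T'.sum w) →
      s(u, v) ∈ T ∧ ∀ e ∈ T, v ∈ e → e = s(u, v) := by
    intro T hT hmin
    have hl : ∀ e ∈ T, v ∈ e → e = s(u, v) := fun e he hve =>
      hleafP e ⟨T, hT, hmin, he⟩ hve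
    obtain ⟨e, heT, hve⟩ := exists_edge_at
      (hT.2.1 v (Finset.mem_univ v) u (Finset.mem_univ u)) huv.symm
    exact ⟨hl e heT hve ▸ heT, hl⟩
  obtain ⟨T0, hT0, hmin0, huvT0⟩ := hedge
  obtain ⟨_, hl0⟩ := treeLeaf T0 hT0 hmin0
  have hErase0 := erase_spanning hT0 huvT0 hl0
  ext e
  simp only [Set.mem_diff, Set.mem_singleton_iff]
  constructor
  · rintro ⟨T', hT', hmin', heT'⟩
    have hnot : s(u, v) ∉ T' := fun h => by
      have := (hT'.1 _ h).2 v (by simp)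
      simp at this
    have henuv : e ≠ s(u, v) := fun h => hnot (h ▸ heT')
    refine ⟨⟨insert s(u, v) T', insert_spanning huv hT', ?_,
      Finset.mem_insert_of_mem heT'⟩, henuv⟩
    intro T'' hT''
    have h1 : (insert s(u, v) T').sum w = w s(u, v) + T'.sum w := Finset.sum_insert hnot
    have h2 : T'.sum w ≤ (T0.erase s(u, v)).sum w := hmin' _ hErase0
    have h3 : (T0.erase s(u, v)).sum w + w s(u, v) = T0.sum w :=
      Finset.sum_erase_add _ _ huvT0
    have h4 : T0.sum w ≤ T''.sum w := hmin0 _ hT''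
    linarith
  · rintro ⟨⟨T1, hT1, hmin1, heT1⟩, hne⟩
    obtain ⟨huvT1, hl1⟩ := treeLeaf T1 hT1 hmin1
    refine ⟨T1.erase s(u, v), erase_spanning hT1 huvT1 hl1, ?_,
      Finset.mem_erase.mpr ⟨hne, heT1⟩⟩
    intro T'' hT''
    have hnot : s(u, v) ∉ T'' := fun h => by
      have := (hT''.1 _ h).2 v (by simp)
      simp at this
    have h1 : (T1.erase s(u, v)).sum w + w s(u, v) = T1.sum w :=
      Finset.sum_erase_add _ _ huvT1
    have h2 : T1.sum w ≤ (insert s(u, v) T'').sum w :=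
      hmin1 _ (insert_spanning huv hT'')
    have h3 : (insert s(u, v) T'').sum w = w s(u, v) + T''.sum w := Finset.sum_insert hnot
    linarith
end

section
/- For every complete graph G = (V, E) on n vertices with distinct positive edge weights and every k ∈ {1, …, n−1}, the graph (V, M_k(G)) is k-constructible. -/
section AuxStmt5
open SimpleGraph

set_option linter.unusedSectionVars false
set_option maxHeartbeats 1000000

variable {V : Type*} [Fintype V] [DecidableEq V]

lemma aux_dich {F : Set (Sym2 V)} {e : Sym2 V} {u v : V} (he : e = s(u, v))
    {x y : V} (p : (fromEdgeSet F).Walk x y) :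
    (fromEdgeSet (F \ {e})).Reachable x y ∨ (fromEdgeSet (F \ {e})).Reachable x u ∨
      (fromEdgeSet (F \ {e})).Reachable x v := by
  induction p with
  | nil => exact Or.inl (Reachable.refl _)
  | @cons a b c h q ih =>
    rw [SimpleGraph.fromEdgeSet_adj] at h
    by_cases hez : s(a, b) = e
    · rw [he, Sym2.eq_iff] at hez
      rcases hez with ⟨rfl, rfl⟩ | ⟨rfl, rfl⟩
      · exact Or.inr (Or.inl (Reachable.refl _))
      · exact Or.inr (Or.inr (Reachable.refl _))
    · have hadj : (fromEdgeSet (F \ {e})).Adj a b :=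
        (SimpleGraph.fromEdgeSet_adj _).2 ⟨⟨h.1, hez⟩, h.2⟩
      rcases ih with h' | h' | h'
      · exact Or.inl (hadj.reachable.trans h')
      · exact Or.inr (Or.inl (hadj.reachable.trans h'))
      · exact Or.inr (Or.inr (hadj.reachable.trans h'))

lemma aux_cross {G H : SimpleGraph V} {x y : V} (p : H.Walk x y) (u : V)
    (hy : ¬ G.Reachable u y) :
    G.Reachable u x →
      ∃ a b, s(a, b) ∈ p.edges ∧ H.Adj a b ∧ G.Reachable u a ∧ ¬ G.Reachable u b := by
  induction p with
  | nil => exact fun hx => absurd hx hy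
  | @cons a b c h q ih =>
    intro hx
    by_cases hb : G.Reachable u b
    · obtain ⟨a', b', hm, rest⟩ := ih hy hb
      exact ⟨a', b', by simp [Walk.edges_cons, hm], rest⟩
    · exact ⟨a, b, by simp [Walk.edges_cons], h, hx, hb⟩

lemma aux_walk_edges {F : Finset (Sym2 V)} {s t x : V}
    (p : (fromEdgeSet (↑F : Set (Sym2 V))).Walk s t)
    (hs : (fromEdgeSet (↑F : Set (Sym2 V))).Reachable s x) :
    ∀ f ∈ p.edges, f ∈ F ∧ ∀ z ∈ f, (fromEdgeSet (↑F : Set (Sym2 V))).Reachable z x := by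
  induction p with
  | nil => simp
  | @cons a b c h q ih =>
    intro f hf
    have hb : (fromEdgeSet (↑F : Set (Sym2 V))).Reachable b x :=
      (h.symm.reachable).trans hs
    rw [Walk.edges_cons, List.mem_cons] at hf
    rcases hf with rfl | hf
    · refine ⟨((SimpleGraph.fromEdgeSet_adj _).1 h).1, ?_⟩
      intro z hz
      rw [Sym2.mem_iff] at hz
      rcases hz with rfl | rfl
      · exact hs
      · exact hb
    · exact ih hb f hf

lemma aux_count (n : ℕ) : ∀ (F : Finset (Sym2 V)), F.card = n →
    (∀ f ∈ F, ¬ f.IsDiag) →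
    ∀ S : Finset V, (∀ x ∈ S, ∀ y ∈ S, (fromEdgeSet (↑F : Set (Sym2 V))).Reachable x y) →
    S.card ≤ F.card + 1 := by
  induction n using Nat.strong_induction_on with
  | _ n ihn =>
  intro F hFn hnd S hconn
  classical
  rcases le_or_gt S.card 1 with hS1 | hS1
  · omega
  · rw [Finset.one_lt_card] at hS1
    obtain ⟨x, hxS, y, hyS, hxy⟩ := hS1
    obtain ⟨p⟩ := hconn x hxS y hyS
    cases p with
    | nil => exact absurd rfl hxy
    | @cons _ z _ h q =>
      rw [SimpleGraph.fromEdgeSet_adj] at h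
      set e' : Sym2 V := s(x, z) with he'
      have he'F : e' ∈ F := h.1
      have hn1 : (F.erase e').card = n - 1 := by
        rw [Finset.card_erase_of_mem he'F, hFn]
      have hnpos : 1 ≤ n := by
        rw [← hFn]; exact Finset.card_pos.2 ⟨e', he'F⟩
      set G' := fromEdgeSet (↑(F.erase e') : Set (Sym2 V)) with hG'
      have hcoe : (↑(F.erase e') : Set (Sym2 V)) = (↑F : Set (Sym2 V)) \ {e'} := by
        simp [Finset.coe_erase]
      have hsd : ∀ s ∈ S, G'.Reachable s x ∨ G'.Reachable s z := by
        intro s hs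
        obtain ⟨p⟩ := hconn s hs x hxS
        have := aux_dich (he'.symm ▸ rfl : e' = s(x, z)) p
        rw [← hcoe] at this
        tauto
      by_cases hxz : G'.Reachable x z
      · have : ∀ s ∈ S, ∀ t ∈ S, G'.Reachable s t := by
          intro s hs t ht
          have h1 := (hsd s hs).elim id (fun h => h.trans hxz.symm)
          have h2 := (hsd t ht).elim id (fun h => h.trans hxz.symm)
          exact h1.trans h2.symm
        have := ihn (n-1) (by omega) (F.erase e') hn1
          (fun f hf => hnd f (Finset.mem_of_mem_erase hf)) S this
        omega
      · set S1 := S.filter (fun s => G'.Reachable s x) with hS1def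
        set S2 := S.filter (fun s => G'.Reachable s z) with hS2def
        set F1 := (F.erase e').filter (fun f => ∀ p ∈ f, G'.Reachable p x) with hF1def
        set F2 := (F.erase e').filter (fun f => ∀ p ∈ f, G'.Reachable p z) with hF2def
        have hdisjF : Disjoint F1 F2 := by
          rw [Finset.disjoint_left]
          intro f hf1 hf2
          rw [hF1def, Finset.mem_filter] at hf1
          rw [hF2def, Finset.mem_filter] at hf2
          induction f using Sym2.ind with
          | _ a b =>
            exact hxz (((hf1.2 a (Sym2.mem_mk_left a b)).symm).trans
              (hf2.2 a (Sym2.mem_mk_left a b)))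
        have hcard12 : F1.card + F2.card ≤ n - 1 := by
          rw [← Finset.card_union_of_disjoint hdisjF, ← hn1]
          exact Finset.card_le_card (Finset.union_subset
            (Finset.filter_subset _ _) (Finset.filter_subset _ _))
        have hcon1 : ∀ s ∈ S1, ∀ t ∈ S1, (fromEdgeSet (↑F1 : Set (Sym2 V))).Reachable s t := by
          intro s hs t ht
          rw [hS1def, Finset.mem_filter] at hs ht
          obtain ⟨q⟩ := hs.2.trans ht.2.symm
          have hedges := aux_walk_edges q hs.2
          refine ⟨q.transfer _ ?_⟩
          intro f hf
          rw [SimpleGraph.edgeSet_fromEdgeSet, Set.mem_diff]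
          refine ⟨?_, ?_⟩
          · rw [Finset.mem_coe, hF1def, Finset.mem_filter]
            exact ⟨(hedges f hf).1, (hedges f hf).2⟩
          · have := Walk.edges_subset_edgeSet q hf
            rw [SimpleGraph.edgeSet_fromEdgeSet, Set.mem_diff] at this
            exact this.2
        have hcon2 : ∀ s ∈ S2, ∀ t ∈ S2, (fromEdgeSet (↑F2 : Set (Sym2 V))).Reachable s t := by
          intro s hs t ht
          rw [hS2def, Finset.mem_filter] at hs ht
          obtain ⟨q⟩ := hs.2.trans ht.2.symm
          have hedges := aux_walk_edges q hs.2
          refine ⟨q.transfer _ ?_⟩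
          intro f hf
          rw [SimpleGraph.edgeSet_fromEdgeSet, Set.mem_diff]
          refine ⟨?_, ?_⟩
          · rw [Finset.mem_coe, hF2def, Finset.mem_filter]
            exact ⟨(hedges f hf).1, (hedges f hf).2⟩
          · have := Walk.edges_subset_edgeSet q hf
            rw [SimpleGraph.edgeSet_fromEdgeSet, Set.mem_diff] at this
            exact this.2
        have hF1n : F1.card < n := by
          have : F1.card ≤ (F.erase e').card := Finset.card_le_card (Finset.filter_subset _ _)
          omega
        have hF2n : F2.card < n := by
          have : F2.card ≤ (F.erase e').card := Finset.card_le_card (Finset.filter_subset _ _)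
          omega
        have h1 := ihn F1.card hF1n F1 rfl
          (fun f hf => hnd f (Finset.mem_of_mem_erase (Finset.mem_of_mem_filter f hf))) S1 hcon1
        have h2 := ihn F2.card hF2n F2 rfl
          (fun f hf => hnd f (Finset.mem_of_mem_erase (Finset.mem_of_mem_filter f hf))) S2 hcon2
        have hsub : S ⊆ S1 ∪ S2 := by
          intro s hs
          rw [Finset.mem_union, hS1def, hS2def, Finset.mem_filter, Finset.mem_filter]
          rcases hsd s hs with h' | h'
          · exact Or.inl ⟨hs, h'⟩
          · exact Or.inr ⟨hs, h'⟩
        have hdisjS : Disjoint S1 S2 := by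
          rw [Finset.disjoint_left]
          intro s hs1 hs2
          rw [hS1def, Finset.mem_filter] at hs1
          rw [hS2def, Finset.mem_filter] at hs2
          exact hxz (hs1.2.symm.trans hs2.2)
        have : S.card ≤ S1.card + S2.card := by
          calc S.card ≤ (S1 ∪ S2).card := Finset.card_le_card hsub
            _ = S1.card + S2.card := Finset.card_union_of_disjoint hdisjS
        omega


end AuxStmt5

open SimpleGraph in
/-- for every complete graph with distinct positive edge weights and
every `k ∈ {1, …, n-1}`, the graph `(V, M_k(G))` is `k`-constructible. -/
theorem stmt_5 {V : Type*} [Fintype V] [DecidableEq V] (w : Sym2 V → ℝ)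
    (hpos : ∀ e : Sym2 V, ¬ e.IsDiag → 0 < w e)
    (hinj : ∀ e f : Sym2 V, ¬ e.IsDiag → ¬ f.IsDiag → w e = w f → e = f)
    (k : ℕ) (hk1 : 1 ≤ k) (hk2 : k ≤ Fintype.card V - 1) :
    IsKConstructible k (SimpleGraph.fromEdgeSet (Mk w k)) := by
  classical
  set F : Finset (Sym2 V) := (Set.toFinite (Mk w k)).toFinset with hF
  have hmem : ∀ f, f ∈ F ↔ f ∈ Mk w k := fun f => (Set.toFinite (Mk w k)).mem_toFinset
  have hnd : ∀ f ∈ F, ¬ f.IsDiag := by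
    intro f hf
    obtain ⟨X, hX, T, hT, hmin, hfT⟩ := (hmem f).1 hf
    exact (hT.1 f hfT).1
  -- a suitable total order on edges, increasing in weight
  set enc : Sym2 V → ℕ := fun e => (Fintype.equivFin (Sym2 V) e : ℕ) with henc_def
  have henc : Function.Injective enc := fun a b h =>
    (Fintype.equivFin (Sym2 V)).injective (Fin.ext h)
  set r : Sym2 V → Sym2 V → Prop :=
    fun a b => w a < w b ∨ (w a = w b ∧ enc a ≤ enc b) with hr
  haveI hrtrans : IsTrans (Sym2 V) r := ⟨by
    intro a b c hab hbc
    rcases hab with h | ⟨h1, h2⟩ <;> rcases hbc with h' | ⟨h1', h2'⟩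
    · exact Or.inl (h.trans h')
    · exact Or.inl (h1' ▸ h)
    · exact Or.inl (h1 ▸ h')
    · exact Or.inr ⟨h1.trans h1', h2.trans h2'⟩⟩
  haveI hranti : Std.Antisymm r := ⟨by
    intro a b hab hba
    rcases hab with h | ⟨h1, h2⟩ <;> rcases hba with h' | ⟨h1', h2'⟩
    · exact absurd h' (lt_asymm h)
    · exact absurd h (by rw [h1']; exact lt_irrefl _)
    · exact absurd h' (by rw [h1]; exact lt_irrefl _)
    · exact henc (le_antisymm h2 h2')⟩
  haveI hrtotal : Std.Total r := ⟨by
    intro a b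
    rcases lt_trichotomy (w a) (w b) with h | h | h
    · exact Or.inl (Or.inl h)
    · rcases le_total (enc a) (enc b) with h' | h'
      · exact Or.inl (Or.inr ⟨h, h'⟩)
      · exact Or.inr (Or.inr ⟨h.symm, h'⟩)
    · exact Or.inr (Or.inl h)⟩
  set l := F.sort r with hl
  have hsorted : l.Pairwise r := F.pairwise_sort r
  have hnodup : l.Nodup := F.sort_nodup r
  have htf : l.toFinset = F := F.sort_toFinset r
  refine ⟨l, hnodup, ?_, ?_⟩
  · rw [htf, SimpleGraph.edgeSet_fromEdgeSet, hF, (Set.toFinite (Mk w k)).coe_toFinset]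
    ext f
    simp only [Set.mem_diff, Set.mem_setOf_eq]
    exact ⟨fun hf => ⟨hf, fun hd => hnd f ((hmem f).2 hf) hd⟩, fun hf => hf.1⟩
  · intro i hi u v huv
    set e := l.get ⟨i, hi⟩ with he
    have hel : e ∈ l := by rw [he]; exact l.get_mem _
    have heF : e ∈ F := htf ▸ List.mem_toFinset.2 hel
    obtain ⟨X, hX, T, hT, hmin, heT⟩ := (hmem e).1 heF
    set S := (Finset.univ \ X : Finset V) with hSdef
    obtain ⟨hediag, hev⟩ := hT.1 e heT
    have huS : u ∈ S := hev u (by rw [huv]; exact Sym2.mem_mk_left u v)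
    have hvS : v ∈ S := hev v (by rw [huv]; exact Sym2.mem_mk_right u v)
    have huX : u ∉ X := (Finset.mem_sdiff.1 huS).2
    have hvX : v ∉ X := (Finset.mem_sdiff.1 hvS).2
    intro hdp
    obtain ⟨P, hpath, hdisj⟩ := hdp
    -- pigeonhole: some path avoids X
    set B : Finset (Fin k) :=
      Finset.univ.filter (fun j => ∃ x ∈ X, x ∈ (P j).support) with hB
    have hchoice : ∀ j ∈ B, ∃ x, x ∈ X ∧ x ∈ (P j).support := by
      intro j hj
      rw [hB, Finset.mem_filter] at hj
      obtain ⟨x, hx1, hx2⟩ := hj.2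
      exact ⟨x, hx1, hx2⟩
    choose g hg1 hg2 using hchoice
    have hBcard : B.card ≤ X.card := by
      apply Finset.card_le_card_of_injOn
        (fun j => if h : j ∈ B then g j h else u)
      · intro j hj
        simp only [Finset.mem_coe] at hj
        simp only [hj, dif_pos]
        exact Finset.mem_coe.2 (hg1 j hj)
      · intro j hj j' hj' hgg
        simp only [Finset.mem_coe] at hj hj'
        simp only [hj, hj', dif_pos] at hgg
        by_contra hne'
        have := hdisj hne' (g j hj) (hg2 j hj) (hgg ▸ hg2 j' hj')
        rcases this with h' | h'
        · exact huX (h' ▸ hg1 j hj)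
        · exact hvX (h' ▸ hg1 j hj)
    have hBk : B.card < k := by
      have := hBcard
      omega
    have hex : ∃ j, j ∉ B := by
      by_contra hcon
      push_neg at hcon
      have : B = Finset.univ := Finset.eq_univ_iff_forall.2 hcon
      rw [this, Finset.card_univ, Fintype.card_fin] at hBk
      omega
    obtain ⟨i₀, hi₀⟩ := hex
    set W := P i₀ with hW
    have hsupp : ∀ x ∈ W.support, x ∈ S := by
      intro x hx
      rw [hSdef, Finset.mem_sdiff]
      refine ⟨Finset.mem_univ x, fun hxX => ?_⟩
      exact hi₀ (by rw [hB, Finset.mem_filter]; exact ⟨Finset.mem_univ _, x, hxX, hx⟩)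
    -- earlier edges are lighter
    have hlight : ∀ f ∈ W.edges, f ∈ F ∧ w f < w e ∧ ¬ f.IsDiag ∧ f ≠ e := by
      intro f hf
      have hfE := W.edges_subset_edgeSet hf
      rw [SimpleGraph.edgeSet_fromEdgeSet, Set.mem_diff] at hfE
      have hftake : f ∈ l.take i := List.mem_toFinset.1 (Finset.mem_coe.1 hfE.1)
      have hfl : f ∈ l := List.mem_of_mem_take hftake
      have hfF : f ∈ F := htf ▸ List.mem_toFinset.2 hfl
      have hegetElem : e = l[i] := by rw [he]; rfl
      have hedrop : e ∈ l.drop i := by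
        rw [hegetElem, List.drop_eq_getElem_cons hi]
        exact List.mem_cons_self
      have hrfe : r f e := hsorted.rel_of_mem_take_of_mem_drop hftake hedrop
      have hfne : f ≠ e := by
        intro hcon
        exact (List.disjoint_take_drop hnodup le_rfl) hftake (hcon ▸ hedrop)
      have hfd : ¬ f.IsDiag := hnd f hfF
      have hwf : w f < w e := by
        rcases hrfe with h | ⟨h1, _⟩
        · exact h
        · exact absurd (hinj f e hfd hediag h1) hfne
      exact ⟨hfF, hwf, hfd, hfne⟩
    -- MST exchange
    set E0 : Finset (Sym2 V) := T.erase e with hE0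
    set G0 := fromEdgeSet (↑E0 : Set (Sym2 V)) with hG0
    have hcoe0 : (↑E0 : Set (Sym2 V)) = (↑T : Set (Sym2 V)) \ {e} := by
      rw [hE0]; simp [Finset.coe_erase]
    have hdichS : ∀ s ∈ S, G0.Reachable s u ∨ G0.Reachable s v := by
      intro s hs
      obtain ⟨p⟩ := hT.2.1 s hs u huS
      have := aux_dich huv p
      rw [← hcoe0, ← hG0] at this
      tauto
    have hndE0 : ∀ f ∈ E0, ¬ f.IsDiag := fun f hf =>
      (hT.1 f (Finset.mem_of_mem_erase hf)).1
    have hCuv : ¬ G0.Reachable u v := by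
      intro hR
      have hall : ∀ s ∈ S, ∀ t ∈ S, G0.Reachable s t := by
        intro s hs t ht
        have h1 := (hdichS s hs).elim id (fun h => h.trans hR.symm)
        have h2 := (hdichS t ht).elim id (fun h => h.trans hR.symm)
        exact h1.trans h2.symm
      have hcnt := aux_count E0.card E0 rfl hndE0 S hall
      have hTe : E0.card = T.card - 1 := Finset.card_erase_of_mem heT
      have hTpos : 0 < T.card := Finset.card_pos.2 ⟨e, heT⟩
      have hTS := hT.2.2
      omega
    obtain ⟨a, b, habW, hadjW, hua, hub⟩ := aux_cross W u hCuv (Reachable.refl u)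
    have haS : a ∈ S := hsupp a (W.fst_mem_support_of_mem_edges habW)
    have hbS : b ∈ S := hsupp b (W.snd_mem_support_of_mem_edges habW)
    obtain ⟨hfF, hwf, hfd, hfne⟩ := hlight s(a, b) habW
    have hab : a ≠ b := hadjW.ne
    have hfT : s(a, b) ∉ T := by
      intro hmemT
      have hadj0 : G0.Adj a b := (SimpleGraph.fromEdgeSet_adj _).2
        ⟨Finset.mem_coe.2 (Finset.mem_erase.2 ⟨hfne, hmemT⟩), hab⟩
      exact hub (hua.trans hadj0.reachable)
    have hbv : G0.Reachable b v := by
      rcases hdichS b hbS with h | h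
      · exact absurd h.symm hub
      · exact h
    set T' := insert s(a, b) E0 with hT'
    have hfE0 : s(a, b) ∉ E0 := fun h => hfT (Finset.mem_of_mem_erase h)
    have hGmono : G0 ≤ fromEdgeSet (↑T' : Set (Sym2 V)) := by
      apply SimpleGraph.fromEdgeSet_mono
      intro g hg
      exact Finset.mem_coe.2 (Finset.mem_insert_of_mem (Finset.mem_coe.1 hg))
    set G' := fromEdgeSet (↑T' : Set (Sym2 V)) with hG'def
    have hG'ab : G'.Adj a b := (SimpleGraph.fromEdgeSet_adj _).2
      ⟨Finset.mem_coe.2 (Finset.mem_insert_self _ _), hab⟩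
    have hG'uv : G'.Reachable u v :=
      ((hua.mono hGmono).trans hG'ab.reachable).trans (hbv.mono hGmono)
    have hsp : IsSpanningTreeOn S T' := by
      refine ⟨?_, ?_, ?_⟩
      · intro g hg
        rcases Finset.mem_insert.1 hg with rfl | hg'
        · refine ⟨hfd, fun z hz => ?_⟩
          rcases Sym2.mem_iff.1 hz with rfl | rfl
          · exact haS
          · exact hbS
        · exact hT.1 g (Finset.mem_of_mem_erase hg')
      · intro s hs t ht
        have h1 : G'.Reachable s u := by
          rcases hdichS s hs with h | h
          · exact h.mono hGmono
          · exact (h.mono hGmono).trans hG'uv.symm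
        have h2 : G'.Reachable t u := by
          rcases hdichS t ht with h | h
          · exact h.mono hGmono
          · exact (h.mono hGmono).trans hG'uv.symm
        exact h1.trans h2.symm
      · have h1 : T'.card = E0.card + 1 := by
          rw [hT']; exact Finset.card_insert_of_notMem hfE0
        have h2 : E0.card = T.card - 1 := Finset.card_erase_of_mem heT
        have h3 := hT.2.2
        have hTpos : 0 < T.card := Finset.card_pos.2 ⟨e, heT⟩
        omega
    have hle := hmin T' hsp
    have hsum : T'.sum w < T.sum w := by
      rw [hT', Finset.sum_insert hfE0]
      have hsea := Finset.sum_erase_add T w heT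
      rw [hE0]
      linarith
    linarith
end

section
/- For every complete graph G = (V, E) on n vertices with distinct positive edge weights and every k ∈ {1, …, n−1}, the ordering of the edges of M_k(G) by increasing edge weight is a k-construction order for the graph (V, M_k(G)). -/
section Aux
open SimpleGraph
variable {V : Type*}

lemma reach_erase_aux {A D : Finset (Sym2 V)} {a b : V}
    (hD : ∀ e : Sym2 V, e ∈ A → e ≠ s(a,b) → e ∈ D) :
    ∀ {x y : V}, (SimpleGraph.fromEdgeSet (↑A : Set (Sym2 V))).Walk x y →
      (SimpleGraph.fromEdgeSet (↑D : Set (Sym2 V))).Reachable x y ∨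
      (SimpleGraph.fromEdgeSet (↑D : Set (Sym2 V))).Reachable x a ∨
      (SimpleGraph.fromEdgeSet (↑D : Set (Sym2 V))).Reachable x b := by
  intro x y p
  induction p with
  | nil => exact Or.inl (Reachable.refl _)
  | @cons x z _ hadj p ih =>
    rw [fromEdgeSet_adj] at hadj
    obtain ⟨hmem, hne⟩ := hadj
    by_cases hxy : s(x, z) = s(a, b)
    · rcases Sym2.eq_iff.1 hxy with ⟨hx, _⟩ | ⟨hx, _⟩
      · exact Or.inr (Or.inl (hx ▸ Reachable.refl _))
      · exact Or.inr (Or.inr (hx ▸ Reachable.refl _))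
    · have hadj' : (SimpleGraph.fromEdgeSet (↑D : Set (Sym2 V))).Adj x z := by
        rw [fromEdgeSet_adj]
        exact ⟨Finset.mem_coe.2 (hD _ (Finset.mem_coe.1 hmem) hxy), hne⟩
      exact ih.imp hadj'.reachable.trans (Or.imp hadj'.reachable.trans hadj'.reachable.trans)

/-- Deleting an edge `s(a,b)` from an edge finset: anything reaching `a` still
reaches `a` or `b`. -/
lemma reach_erase_s6 [DecidableEq V] {A : Finset (Sym2 V)} {a b x : V}
    (h : (SimpleGraph.fromEdgeSet (↑A : Set (Sym2 V))).Reachable x a) :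
    (SimpleGraph.fromEdgeSet (↑(A.erase s(a,b)) : Set (Sym2 V))).Reachable x a ∨
    (SimpleGraph.fromEdgeSet (↑(A.erase s(a,b)) : Set (Sym2 V))).Reachable x b := by
  obtain ⟨p⟩ := h
  have := reach_erase_aux (A := A) (D := A.erase s(a,b)) (a := a) (b := b)
    (fun e he hne => Finset.mem_erase.2 ⟨hne, he⟩) p
  tauto

/-- Restriction of reachability to a closed vertex set. -/
lemma reach_restrict {A1 A' : Finset (Sym2 V)} {C : Set V}
    (hcl : ∀ x y : V, s(x,y) ∈ A' → x ≠ y → x ∈ C → y ∈ C)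
    (hf : ∀ x y : V, s(x,y) ∈ A' → x ∈ C → y ∈ C → s(x,y) ∈ A1) :
    ∀ {x y : V}, x ∈ C → (SimpleGraph.fromEdgeSet (↑A' : Set (Sym2 V))).Reachable x y →
      (SimpleGraph.fromEdgeSet (↑A1 : Set (Sym2 V))).Reachable x y := by
  intro x y hx h
  obtain ⟨p⟩ := h
  induction p with
  | nil => exact Reachable.refl _
  | @cons x z _ hadj p ih =>
    rw [fromEdgeSet_adj] at hadj
    obtain ⟨hmem, hne⟩ := hadj
    have hmem' : s(x, z) ∈ A' := by simpa using hmem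
    have hz : z ∈ C := hcl x z hmem' hne hx
    have hadj1 : (SimpleGraph.fromEdgeSet (↑A1 : Set (Sym2 V))).Adj x z := by
      rw [fromEdgeSet_adj]
      exact ⟨by simpa using hf x z hmem' hx hz, hne⟩
    exact hadj1.reachable.trans (ih hz)

/-- A walk from inside `C` to outside `C` crosses the boundary. -/
lemma crossing {H : SimpleGraph V} {C : Set V} :
    ∀ {x y : V} (p : H.Walk x y), x ∈ C → y ∉ C →
      ∃ a b : V, H.Adj a b ∧ a ∈ C ∧ b ∉ C ∧ a ∈ p.support ∧ b ∈ p.support := by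
  intro x y p
  induction p with
  | nil => intro hx hy; exact absurd hx hy
  | @cons x z _ hadj p ih =>
    intro hx hy
    by_cases hz : z ∈ C
    · obtain ⟨a, b, h1, h2, h3, h4, h5⟩ := ih hz hy
      exact ⟨a, b, h1, h2, h3, by simp [Walk.support_cons, h4],
        by simp [Walk.support_cons, h5]⟩
    · exact ⟨x, z, hadj, hx, hz, by simp [Walk.support_cons],
        by simp [Walk.support_cons]⟩

/-- A set of edges connecting all of `S` has at least `|S| - 1` elements. -/
lemma count_lemma [DecidableEq V] :
    ∀ (n : ℕ) (A : Finset (Sym2 V)), A.card ≤ n → ∀ (S : Finset V),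
    (∀ f ∈ A, ¬ f.IsDiag ∧ ∀ x ∈ f, x ∈ S) →
    (∀ u ∈ S, ∀ v ∈ S, (SimpleGraph.fromEdgeSet (↑A : Set (Sym2 V))).Reachable u v) →
    S.card ≤ A.card + 1 := by
  intro n
  induction n with
  | zero =>
    intro A hcard S hA hreach
    have hAe : A = ∅ := Finset.card_eq_zero.1 (Nat.le_zero.1 hcard)
    subst hAe
    have : S.card ≤ 1 := Finset.card_le_one.2 (by
      intro u hu v hv
      have := hreach u hu v hv
      rw [show ((↑(∅ : Finset (Sym2 V)) : Set (Sym2 V))) = ∅ by simp,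
        fromEdgeSet_empty, reachable_bot] at this
      exact this)
    simpa using this
  | succ n ih =>
    intro A hcard S hA hreach
    rcases A.eq_empty_or_nonempty with rfl | ⟨e, he⟩
    · -- same as base case
      have : S.card ≤ 1 := Finset.card_le_one.2 (by
        intro u hu v hv
        have := hreach u hu v hv
        rw [show ((↑(∅ : Finset (Sym2 V)) : Set (Sym2 V))) = ∅ by simp,
          fromEdgeSet_empty, reachable_bot] at this
        exact this)
      simpa using this
    · induction e using Sym2.ind with
      | _ a b =>
      classical
      obtain ⟨hdiag, hend⟩ := hA _ he
      have hab : a ≠ b := fun h => hdiag (Sym2.mk_isDiag_iff.2 h)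
      have haS : a ∈ S := hend a (Sym2.mem_mk_left a b)
      have hbS : b ∈ S := hend b (Sym2.mem_mk_right a b)
      set A' : Finset (Sym2 V) := A.erase s(a,b) with hA'def
      have hA'sub : A' ⊆ A := Finset.erase_subset _ _
      have hA'card : A'.card = A.card - 1 := Finset.card_erase_of_mem he
      have hApos : 1 ≤ A.card := Finset.card_pos.2 ⟨_, he⟩
      have hA'le : A'.card ≤ n := by omega
      -- dichotomy
      have hdich : ∀ x ∈ S,
          (SimpleGraph.fromEdgeSet (↑A' : Set (Sym2 V))).Reachable a x ∨
          (SimpleGraph.fromEdgeSet (↑A' : Set (Sym2 V))).Reachable b x := by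
        intro x hx
        have := reach_erase_s6 (A := A) (b := b) (hreach x hx a haS)
        exact this.imp Reachable.symm Reachable.symm
      by_cases hb : (SimpleGraph.fromEdgeSet (↑A' : Set (Sym2 V))).Reachable a b
      · -- A' still connects all of S
        have hall : ∀ x ∈ S, (SimpleGraph.fromEdgeSet (↑A' : Set (Sym2 V))).Reachable a x := by
          intro x hx
          rcases hdich x hx with h | h
          · exact h
          · exact hb.trans h
        have := ih A' hA'le S
          (fun f hf => hA f (hA'sub hf))
          (fun u hu v hv => ((hall u hu).symm).trans (hall v hv))
        omega
      · -- two components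
        set p : V → Prop := fun x => (SimpleGraph.fromEdgeSet (↑A' : Set (Sym2 V))).Reachable a x
          with hpdef
        set Ca : Finset V := S.filter p with hCa
        set Cb : Finset V := S.filter (fun x => ¬ p x) with hCb
        have hCaS : ∀ x ∈ Ca, x ∈ S ∧ p x := fun x hx => Finset.mem_filter.1 hx
        have hCbS : ∀ x ∈ Cb, x ∈ S ∧ ¬ p x := fun x hx => Finset.mem_filter.1 hx
        set A1 : Finset (Sym2 V) := A'.filter (fun f => ∀ x ∈ f, x ∈ Ca) with hA1
        set A2 : Finset (Sym2 V) := A'.filter (fun f => ∀ x ∈ f, x ∈ Cb) with hA2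
        -- closure facts
        have hclA : ∀ x y : V, s(x,y) ∈ A' → x ≠ y → x ∈ (↑Ca : Set V) → y ∈ (↑Ca : Set V) := by
          intro x y hxy hne hx
          have hx' := Finset.mem_filter.1 (Finset.mem_coe.1 hx)
          have hyS : y ∈ S := (hA _ (hA'sub hxy)).2 y (Sym2.mem_mk_right x y)
          have hadj : (SimpleGraph.fromEdgeSet (↑A' : Set (Sym2 V))).Adj x y :=
            (fromEdgeSet_adj _).2 ⟨Finset.mem_coe.2 hxy, hne⟩
          exact Finset.mem_coe.2 (Finset.mem_filter.2 ⟨hyS, hx'.2.trans hadj.reachable⟩)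
        have hclB : ∀ x y : V, s(x,y) ∈ A' → x ≠ y → x ∈ (↑Cb : Set V) → y ∈ (↑Cb : Set V) := by
          intro x y hxy hne hx
          have hx' := Finset.mem_filter.1 (Finset.mem_coe.1 hx)
          have hyS : y ∈ S := (hA _ (hA'sub hxy)).2 y (Sym2.mem_mk_right x y)
          have hadj : (SimpleGraph.fromEdgeSet (↑A' : Set (Sym2 V))).Adj x y :=
            (fromEdgeSet_adj _).2 ⟨Finset.mem_coe.2 hxy, hne⟩
          refine Finset.mem_coe.2 (Finset.mem_filter.2 ⟨hyS, fun hy => hx'.2 ?_⟩)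
          exact hy.trans hadj.reachable.symm
        have hfA1 : ∀ x y : V, s(x,y) ∈ A' → x ∈ (↑Ca : Set V) → y ∈ (↑Ca : Set V) →
            s(x,y) ∈ A1 := by
          intro x y hxy hx hy
          refine Finset.mem_filter.2 ⟨hxy, ?_⟩
          intro z hz
          rcases Sym2.mem_iff.1 hz with rfl | rfl
          · exact Finset.mem_coe.1 hx
          · exact Finset.mem_coe.1 hy
        have hfA2 : ∀ x y : V, s(x,y) ∈ A' → x ∈ (↑Cb : Set V) → y ∈ (↑Cb : Set V) →
            s(x,y) ∈ A2 := by
          intro x y hxy hx hy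
          refine Finset.mem_filter.2 ⟨hxy, ?_⟩
          intro z hz
          rcases Sym2.mem_iff.1 hz with rfl | rfl
          · exact Finset.mem_coe.1 hx
          · exact Finset.mem_coe.1 hy
        have h1 : Ca.card ≤ A1.card + 1 := by
          refine ih A1 (le_trans (Finset.card_le_card (Finset.filter_subset _ _))
            hA'le) Ca ?_ ?_
          · intro f hf1
            have hf' : f ∈ A' := Finset.mem_of_mem_filter _ hf1
            exact ⟨(hA f (hA'sub hf')).1, (Finset.mem_filter.1 hf1).2⟩
          · intro u hu v hv
            have hu' := Finset.mem_filter.1 hu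
            have hv' := Finset.mem_filter.1 hv
            exact reach_restrict hclA hfA1 (Finset.mem_coe.2 hu)
              (hu'.2.symm.trans hv'.2)
        have h2 : Cb.card ≤ A2.card + 1 := by
          refine ih A2 (le_trans (Finset.card_le_card (Finset.filter_subset _ _))
            hA'le) Cb ?_ ?_
          · intro f hf2
            have hf' : f ∈ A' := Finset.mem_of_mem_filter _ hf2
            exact ⟨(hA f (hA'sub hf')).1, (Finset.mem_filter.1 hf2).2⟩
          · intro u hu v hv
            have hu' := Finset.mem_filter.1 hu
            have hv' := Finset.mem_filter.1 hv
            have hub : (SimpleGraph.fromEdgeSet (↑A' : Set (Sym2 V))).Reachable b u := by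
              rcases hdich u hu'.1 with h | h
              · exact absurd h hu'.2
              · exact h
            have hvb : (SimpleGraph.fromEdgeSet (↑A' : Set (Sym2 V))).Reachable b v := by
              rcases hdich v hv'.1 with h | h
              · exact absurd h hv'.2
              · exact h
            exact reach_restrict hclB hfA2 (Finset.mem_coe.2 hu) (hub.symm.trans hvb)
        have hdisj : Disjoint A1 A2 := by
          rw [Finset.disjoint_left]
          intro f hf1 hf2
          induction f using Sym2.ind with
          | _ x y =>
          have hx1 : x ∈ Ca := (Finset.mem_filter.1 hf1).2 x (Sym2.mem_mk_left x y)
          have hx2 : x ∈ Cb := (Finset.mem_filter.1 hf2).2 x (Sym2.mem_mk_left x y)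
          exact (Finset.mem_filter.1 hx2).2 (Finset.mem_filter.1 hx1).2
        have hsubU : A1 ∪ A2 ⊆ A' :=
          Finset.union_subset (Finset.filter_subset _ _) (Finset.filter_subset _ _)
        have hcardU : A1.card + A2.card ≤ A'.card := by
          rw [← Finset.card_union_of_disjoint hdisj]
          exact Finset.card_le_card hsubU
        have hSsplit : Ca.card + Cb.card = S.card :=
          Finset.card_filter_add_card_filter_not (p := p)
        omega

/-- Cycle property: a minimum spanning tree edge cannot be bypassed by a path all of
whose potential edges are strictly lighter. -/
lemma mst_no_light_path {V : Type*} [Fintype V] [DecidableEq V] (w : Sym2 V → ℝ)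
    (S : Finset V) (T : Finset (Sym2 V)) (hT : IsSpanningTreeOn S T)
    (hmin : ∀ T' : Finset (Sym2 V), IsSpanningTreeOn S T' → T.sum w ≤ T'.sum w)
    {u v : V} (he : s(u,v) ∈ T)
    {H : SimpleGraph V} (p : H.Walk u v)
    (hsupp : ∀ x ∈ p.support, x ∈ S)
    (hlight : ∀ a b : V, H.Adj a b → w s(a,b) < w s(u,v)) : False := by
  obtain ⟨hTedges, hTconn, hTcard⟩ := hT
  have huS : u ∈ S := (hTedges _ he).2 u (Sym2.mem_mk_left u v)
  have hvS : v ∈ S := (hTedges _ he).2 v (Sym2.mem_mk_right u v)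
  set A' : Finset (Sym2 V) := T.erase s(u,v) with hA'def
  have hA'sub : A' ⊆ T := Finset.erase_subset _ _
  have hA'card : A'.card = T.card - 1 := Finset.card_erase_of_mem he
  have hTpos : 1 ≤ T.card := Finset.card_pos.2 ⟨_, he⟩
  have hdich : ∀ x ∈ S,
      (SimpleGraph.fromEdgeSet (↑A' : Set (Sym2 V))).Reachable x u ∨
      (SimpleGraph.fromEdgeSet (↑A' : Set (Sym2 V))).Reachable x v := by
    intro x hx
    exact reach_erase_s6 (A := T) (b := v) (hTconn x hx u huS)
  by_cases hb : (SimpleGraph.fromEdgeSet (↑A' : Set (Sym2 V))).Reachable u v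
  · -- A' would still connect S, contradicting the edge count
    have hall : ∀ x ∈ S, (SimpleGraph.fromEdgeSet (↑A' : Set (Sym2 V))).Reachable x u := by
      intro x hx
      rcases hdich x hx with h | h
      · exact h
      · exact h.trans hb.symm
    have := count_lemma A'.card A' le_rfl S (fun f hf => hTedges f (hA'sub hf))
      (fun x hx y hy => (hall x hx).trans (hall y hy).symm)
    omega
  · set C : Set V := {x | (SimpleGraph.fromEdgeSet (↑A' : Set (Sym2 V))).Reachable u x}
      with hCdef
    have huC : u ∈ C := Reachable.refl _
    have hvC : v ∉ C := hb
    obtain ⟨a, b, hadj, haC, hbC, haSup, hbSup⟩ := crossing p huC hvC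
    have haS : a ∈ S := hsupp a haSup
    have hbS : b ∈ S := hsupp b hbSup
    have hne_ab : a ≠ b := hadj.ne
    have hfw : w s(a,b) < w s(u,v) := hlight a b hadj
    have hfne : s(a,b) ≠ s(u,v) := fun h => by rw [h] at hfw; exact lt_irrefl _ hfw
    have hfA' : s(a,b) ∉ A' := by
      intro hmem
      exact hbC (haC.trans ((fromEdgeSet_adj _).2 ⟨Finset.mem_coe.2 hmem, hne_ab⟩).reachable)
    set T' : Finset (Sym2 V) := insert s(a,b) A' with hT'def
    have hmono : SimpleGraph.fromEdgeSet (↑A' : Set (Sym2 V)) ≤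
        SimpleGraph.fromEdgeSet (↑T' : Set (Sym2 V)) := by
      apply fromEdgeSet_mono
      intro x hx
      exact Finset.mem_coe.2 (Finset.mem_insert_of_mem (Finset.mem_coe.1 hx))
    have hbv : (SimpleGraph.fromEdgeSet (↑A' : Set (Sym2 V))).Reachable b v := by
      rcases hdich b hbS with h | h
      · exact absurd h.symm hbC
      · exact h
    have hadjT' : (SimpleGraph.fromEdgeSet (↑T' : Set (Sym2 V))).Adj a b :=
      (fromEdgeSet_adj _).2 ⟨Finset.mem_coe.2 (Finset.mem_insert_self _ _), hne_ab⟩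
    have huv' : (SimpleGraph.fromEdgeSet (↑T' : Set (Sym2 V))).Reachable u v :=
      ((haC.mono hmono).trans hadjT'.reachable).trans (hbv.mono hmono)
    have hT' : IsSpanningTreeOn S T' := by
      refine ⟨?_, ?_, ?_⟩
      · intro f hf
        rcases Finset.mem_insert.1 hf with rfl | hf'
        · refine ⟨fun h => hne_ab (Sym2.mk_isDiag_iff.1 h), ?_⟩
          intro x hx
          rcases Sym2.mem_iff.1 hx with rfl | rfl
          · exact haS
          · exact hbS
        · exact hTedges f (hA'sub hf')
      · have hreachu : ∀ x ∈ S, (SimpleGraph.fromEdgeSet (↑T' : Set (Sym2 V))).Reachable x u := by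
          intro x hx
          rcases hdich x hx with h | h
          · exact h.mono hmono
          · exact (h.mono hmono).trans huv'.symm
        intro x hx y hy
        exact (hreachu x hx).trans (hreachu y hy).symm
      · rw [Finset.card_insert_of_notMem hfA']
        omega
    have hsum1 : A'.sum w + w s(u,v) = T.sum w := Finset.sum_erase_add _ _ he
    have hsum2 : T'.sum w = w s(a,b) + A'.sum w := Finset.sum_insert hfA'
    have := hmin T' hT'
    linarith

end Aux

/-- the ordering of the edges of `M_k(G)` by increasing edge weight is
a `k`-construction order for the graph `(V, M_k(G))`. -/
theorem stmt_6 {V : Type*} [Fintype V] [DecidableEq V] (w : Sym2 V → ℝ)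
    (hpos : ∀ e : Sym2 V, ¬ e.IsDiag → 0 < w e)
    (hinj : ∀ e f : Sym2 V, ¬ e.IsDiag → ¬ f.IsDiag → w e = w f → e = f)
    (k : ℕ) (hk1 : 1 ≤ k) (hk2 : k ≤ Fintype.card V - 1)
    (l : List (Sym2 V)) (hsort : l.Pairwise fun e f => w e < w f)
    (hset : (↑l.toFinset : Set (Sym2 V)) = Mk w k) :
    IsConstructionOrder k (SimpleGraph.fromEdgeSet (Mk w k)) l := by
  classical
  have hMk_nodiag : ∀ e ∈ Mk w k, ¬ e.IsDiag := by
    rintro e ⟨X, hX, T, hT, hmin, heT⟩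
    exact (hT.1 e heT).1
  refine ⟨?_, ?_, ?_⟩
  · -- Nodup
    exact List.Pairwise.imp
      (fun {a b} hab (h : a = b) => by rw [h] at hab; exact lt_irrefl _ hab) hsort
  · -- edge set equality
    rw [SimpleGraph.edgeSet_fromEdgeSet, hset]
    ext e
    simp only [Set.mem_diff, Set.mem_setOf_eq]
    exact ⟨fun h => ⟨h, hMk_nodiag e h⟩, And.left⟩
  · intro i h u v hgetuv hdp
    have hei : l.get ⟨i, h⟩ ∈ Mk w k := by
      rw [← hset]
      exact Finset.mem_coe.2 (List.mem_toFinset.2 (l.get_mem _))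
    rw [hgetuv] at hei
    obtain ⟨X, hXcard, T, hT, hmin, heT⟩ := hei
    set S : Finset V := Finset.univ \ X with hSdef
    have hdiag : ¬ (s(u,v) : Sym2 V).IsDiag := (hT.1 _ heT).1
    have huX : u ∉ X := by
      have := (hT.1 _ heT).2 u (Sym2.mem_mk_left u v)
      exact (Finset.mem_sdiff.1 this).2
    have hvX : v ∉ X := by
      have := (hT.1 _ heT).2 v (Sym2.mem_mk_right u v)
      exact (Finset.mem_sdiff.1 this).2
    obtain ⟨P, hpath, hdisj⟩ := hdp
    -- pigeonhole: some path avoids X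
    set bad : Finset (Fin k) :=
      Finset.univ.filter (fun j => ∃ x ∈ X, x ∈ (P j).support) with hbaddef
    have hbadcard : bad.card ≤ X.card := by
      refine Finset.card_le_card_of_injOn
        (fun j => if hj : ∃ x ∈ X, x ∈ (P j).support then hj.choose else u) ?_ ?_
      · intro j hj
        have hj' : ∃ x ∈ X, x ∈ (P j).support := (Finset.mem_filter.1 hj).2
        dsimp only
        rw [dif_pos hj']
        exact hj'.choose_spec.1
      · intro j1 hj1 j2 hj2 heq
        by_contra hne
        have hj1' : ∃ x ∈ X, x ∈ (P j1).support :=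
          (Finset.mem_filter.1 (Finset.mem_coe.1 hj1)).2
        have hj2' : ∃ x ∈ X, x ∈ (P j2).support :=
          (Finset.mem_filter.1 (Finset.mem_coe.1 hj2)).2
        dsimp only at heq
        rw [dif_pos hj1', dif_pos hj2'] at heq
        have hx1 := hj1'.choose_spec
        have hx2 := hj2'.choose_spec
        have hx2' : hj1'.choose ∈ (P j2).support := by rw [heq]; exact hx2.2
        rcases hdisj hne hj1'.choose hx1.2 hx2' with h' | h'
        · exact huX (h' ▸ hx1.1)
        · exact hvX (h' ▸ hx1.1)
    have hexj : ∃ j : Fin k, j ∉ bad := by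
      by_contra hall
      push_neg at hall
      have : bad = Finset.univ := Finset.eq_univ_iff_forall.2 hall
      rw [this, Finset.card_univ, Fintype.card_fin] at hbadcard
      omega
    obtain ⟨j, hj⟩ := hexj
    have hjX : ∀ x ∈ X, x ∉ (P j).support := by
      intro x hx hxs
      exact hj (Finset.mem_filter.2 ⟨Finset.mem_univ _, ⟨x, hx, hxs⟩⟩)
    have hsupp : ∀ x ∈ (P j).support, x ∈ S :=
      fun x hx => Finset.mem_sdiff.2 ⟨Finset.mem_univ _, fun hxX => hjX x hxX hx⟩
    have hlight : ∀ a b : V,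
        (SimpleGraph.fromEdgeSet (↑(l.take i).toFinset : Set (Sym2 V))).Adj a b →
        w s(a,b) < w s(u,v) := by
      intro a b hadj
      rw [SimpleGraph.fromEdgeSet_adj] at hadj
      have hmem : s(a,b) ∈ (l.take i).toFinset := Finset.mem_coe.1 hadj.1
      rw [List.mem_toFinset] at hmem
      obtain ⟨j', hj', hval⟩ := List.mem_iff_getElem.1 hmem
      have hlen : (l.take i).length = min i l.length := List.length_take
      have hj'i : j' < i := by omega
      have hj'l : j' < l.length := by omega
      have hval' : l[j']'hj'l = s(a,b) := by
        rw [← hval, List.getElem_take]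
      have hrel := List.pairwise_iff_getElem.1 hsort j' i hj'l h hj'i
      rw [hval'] at hrel
      have : l[i]'h = s(u,v) := by
        rw [List.get_eq_getElem] at hgetuv; exact hgetuv
      rwa [this] at hrel
    exact mst_no_light_path w S T hT hmin heT (P j) hsupp hlight
end

section
/- Let G = (V, E) be a k-constructible graph. Then there exists an injective positive edge-weight function on the complete graph G̃ on the vertex set V such that E ⊆ M_k(G̃). -/
set_option linter.unusedSectionVars false
set_option maxHeartbeats 1000000

namespace Stmt7
open SimpleGraph

variable {V : Type*}

/-- `T` separates `A` from `B` in `G`: every walk from `A` to `B` meets `T`. -/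
def Sep (G : SimpleGraph V) (A B T : Finset V) : Prop :=
  ∀ ⦃a⦄, a ∈ A → ∀ ⦃b⦄, b ∈ B → ∀ p : G.Walk a b, ∃ t ∈ T, t ∈ p.support

/-- `k` fully disjoint `A`–`B` paths. -/
def HasAB (G : SimpleGraph V) (A B : Finset V) (k : ℕ) : Prop :=
  ∃ (a b : Fin k → V) (p : ∀ i, G.Walk (a i) (b i)),
    (∀ i, a i ∈ A) ∧ (∀ i, b i ∈ B) ∧ (∀ i, (p i).IsPath) ∧
    ∀ i j, i ≠ j → ∀ z, z ∈ (p i).support → z ∈ (p j).support → False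

lemma mem_support_adj {G : SimpleGraph V} {a b u : V} (w : G.Walk a b)
    (h : u ∈ w.support) : u = a ∨ ∃ c, G.Adj u c := by
  induction w with
  | nil => simp at h; exact Or.inl h
  | @cons x y z hadj p ih =>
      rw [Walk.support_cons, List.mem_cons] at h
      rcases h with h | h
      · exact Or.inl h
      · rcases ih h with h | h
        · exact Or.inr ⟨x, h ▸ hadj.symm⟩
        · exact Or.inr h

lemma eq_of_walk_edgeSet_empty {G : SimpleGraph V} {a b : V} (w : G.Walk a b)
    (h : G.edgeSet = ∅) : a = b := by
  cases w with
  | nil => rfl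
  | cons hadj p => exact absurd (G.mem_edgeSet.mpr hadj) (by simp [h])

/-- first hit of a set along a walk. -/
lemma exists_prefix_firstHit {G : SimpleGraph V} {a b : V} (w : G.Walk a b) (S : Set V)
    (h : ∃ z ∈ w.support, z ∈ S) :
    ∃ (s : V) (w' : G.Walk a s), s ∈ S ∧ (∀ z ∈ w'.support, z ∈ w.support) ∧
      (∀ z ∈ w'.support, z ∈ S → z = s) := by
  induction w with
  | nil =>
      refine ⟨_, .nil, ?_, by simp, ?_⟩
      · simpa using h
      · intro z hz _; simpa using hz
  | @cons u v b hadj p ih =>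
      by_cases hu : u ∈ S
      · refine ⟨u, .nil, hu, by simp, ?_⟩
        intro z hz _; simpa using hz
      · have h' : ∃ z ∈ p.support, z ∈ S := by
          obtain ⟨z, hz, hzS⟩ := h
          rw [Walk.support_cons, List.mem_cons] at hz
          rcases hz with rfl | hz
          · exact absurd hzS hu
          · exact ⟨z, hz, hzS⟩
        obtain ⟨s, w', hs, hsub, hfirst⟩ := ih h'
        refine ⟨s, .cons hadj w', hs, ?_, ?_⟩
        · intro z hz
          rw [Walk.support_cons, List.mem_cons] at hz ⊢
          rcases hz with rfl | hz
          · exact Or.inl rfl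
          · exact Or.inr (hsub z hz)
        · intro z hz hzS
          rw [Walk.support_cons, List.mem_cons] at hz
          rcases hz with rfl | hz
          · exact absurd hzS hu
          · exact hfirst z hz hzS

/-- rerouting reachability through another edge set. -/
lemma reachable_of_forall_edge {E₁ E₂ : Set (Sym2 V)} {x y : V}
    (h : ∀ p q : V, s(p,q) ∈ E₁ → p ≠ q → (fromEdgeSet E₂).Reachable p q)
    (hr : (fromEdgeSet E₁).Reachable x y) : (fromEdgeSet E₂).Reachable x y := by
  obtain ⟨w⟩ := hr
  induction w with
  | nil => exact Reachable.refl _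
  | @cons u v b hadj p ih =>
      rw [fromEdgeSet_adj] at hadj
      exact (h u v hadj.1 hadj.2).trans ih

/-- crossing edge along a path leaving a set. -/
lemma exists_crossing_edge {G : SimpleGraph V} {u v : V} (w : G.Walk u v)
    (hw : w.IsPath) (A : Set V) (hu : u ∈ A) (hv : v ∉ A) :
    ∃ (x y : V), x ∈ A ∧ y ∉ A ∧ s(x,y) ∈ w.edges ∧
      ∃ (w₁ : G.Walk u x) (w₂ : G.Walk y v),
        (∀ e ∈ w₁.edges, e ∈ w.edges) ∧ (∀ e ∈ w₂.edges, e ∈ w.edges) ∧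
        s(x,y) ∉ w₁.edges ∧ s(x,y) ∉ w₂.edges := by
  induction w with
  | nil => exact absurd hu hv
  | @cons a c b hadj p ih =>
      by_cases hc : c ∈ A
      · obtain ⟨x, y, hx, hy, hxy, w₁, w₂, he₁, he₂, hn₁, hn₂⟩ := ih hw.of_cons hc hv
        refine ⟨x, y, hx, hy, by simp [hxy], .cons hadj w₁, w₂, ?_, ?_, ?_, ?_⟩
        · intro e he
          rw [Walk.edges_cons, List.mem_cons] at he ⊢
          rcases he with rfl | he
          · exact Or.inl rfl
          · exact Or.inr (he₁ e he)
        · intro e he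
          rw [Walk.edges_cons, List.mem_cons]
          exact Or.inr (he₂ e he)
        · rw [Walk.edges_cons, List.mem_cons]
          rintro (hh | hh)
          · have : a ∈ p.support := Walk.fst_mem_support_of_mem_edges p (hh ▸ hxy)
            exact ((Walk.cons_isPath_iff hadj p).mp hw).2 (by simpa using this)
          · exact hn₁ hh
        · exact hn₂
      · refine ⟨a, c, hu, hc, by simp, .nil, p, by simp, ?_, by simp, ?_⟩
        · intro e he
          rw [Walk.edges_cons, List.mem_cons]; exact Or.inr he
        · intro hh
          have : a ∈ p.support := Walk.fst_mem_support_of_mem_edges p hh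
          exact ((Walk.cons_isPath_iff hadj p).mp hw).2 (by simpa using this)


lemma reachable_of_forall_edge' {E₁ E₂ : Set (Sym2 V)} {x y : V}
    (h : ∀ p q : V, s(p,q) ∈ E₁ → p ≠ q → (fromEdgeSet E₂).Reachable p q)
    (hr : (fromEdgeSet E₁).Reachable x y) : (fromEdgeSet E₂).Reachable x y := by
  obtain ⟨w⟩ := hr
  induction w with
  | nil => exact Reachable.refl _
  | @cons u v b hadj p ih =>
      rw [fromEdgeSet_adj] at hadj
      exact (h u v hadj.1 hadj.2).trans ih

lemma exists_spanningTree [Fintype V] [DecidableEq V] :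
    ∀ (n : ℕ) (S : Finset V), S.card = n → S.Nonempty → ∃ T, IsSpanningTreeOn S T := by
  intro n
  induction n with
  | zero =>
      intro S h hne
      rw [Finset.card_eq_zero] at h
      simp [h] at hne
  | succ n ih =>
      intro S hcard hne
      obtain ⟨v, hv⟩ := hne
      rcases Nat.eq_zero_or_pos n with rfl | hn
      · refine ⟨∅, by simp, ?_, by simpa using hcard.symm⟩
        intro x hx y hy
        have hxy : x = y := by
          have hx' := Finset.card_le_one.mp (le_of_eq hcard) x hx y hy
          exact hx'
        exact hxy ▸ Reachable.refl _
      · have hS' : (S.erase v).card = n := by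
          rw [Finset.card_erase_of_mem hv, hcard]; rfl
        have hne' : (S.erase v).Nonempty := by
          rw [← Finset.card_pos, hS']; exact hn
        obtain ⟨T', hT'⟩ := ih (S.erase v) hS' hne'
        obtain ⟨u, hu⟩ := hne'
        have huv : u ≠ v := Finset.ne_of_mem_erase hu
        have huS : u ∈ S := Finset.mem_of_mem_erase hu
        have hnm : s(u,v) ∉ T' := by
          intro hmem
          have := (hT'.1 _ hmem).2 v (by simp)
          exact Finset.notMem_erase v S this
        refine ⟨insert s(u,v) T', ?_, ?_, ?_⟩
        · intro e he
          rcases Finset.mem_insert.mp he with rfl | he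
          · exact ⟨by simp [huv], by intro z hz; rcases Sym2.mem_iff.mp hz with rfl | rfl <;> assumption⟩
          · exact ⟨(hT'.1 e he).1, fun z hz => Finset.mem_of_mem_erase ((hT'.1 e he).2 z hz)⟩
        · have hmono : (fromEdgeSet (↑T' : Set (Sym2 V))) ≤ fromEdgeSet (↑(insert s(u,v) T') : Set (Sym2 V)) := by
            apply fromEdgeSet_mono; intro e he
            simp only [Finset.coe_insert, Set.mem_insert_iff]
            exact Or.inr he
          have hru : ∀ x ∈ S, (fromEdgeSet (↑(insert s(u,v) T') : Set (Sym2 V))).Reachable x u := by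
            intro x hx
            by_cases hxv : x = v
            · subst hxv
              refine Reachable.symm (Adj.reachable ?_)
              rw [fromEdgeSet_adj]
              exact ⟨by simp, huv⟩
            · exact Reachable.mono hmono (hT'.2.1 x (Finset.mem_erase.mpr ⟨hxv, hx⟩) u hu)
          intro x hx y hy
          exact (hru x hx).trans (hru y hy).symm
        · have hc := hT'.2.2
          rw [hS'] at hc
          rw [Finset.card_insert_of_notMem hnm, hcard]
          omega

lemma exists_minSpanningTree [Fintype V] [DecidableEq V] (S : Finset V) (hS : S.Nonempty)
    (w : Sym2 V → ℝ) :
    ∃ T, IsSpanningTreeOn S T ∧ ∀ T', IsSpanningTreeOn S T' → T.sum w ≤ T'.sum w := by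
  classical
  obtain ⟨T₀, hT₀⟩ := exists_spanningTree S.card S rfl hS
  obtain ⟨T, hT, hmin⟩ := Finset.exists_min_image
    (Finset.univ.filter fun T => IsSpanningTreeOn S T) (fun T => T.sum w)
    ⟨T₀, by simp [hT₀]⟩
  refine ⟨T, (Finset.mem_filter.mp hT).2, fun T' hT' => hmin T' (by simp [hT'])⟩

lemma edge_mem_mstEdges [Fintype V] [DecidableEq V] {w : Sym2 V → ℝ}
    (hinj : ∀ e f : Sym2 V, ¬ e.IsDiag → ¬ f.IsDiag → w e = w f → e = f)
    {S : Finset V} {u v : V} (hu : u ∈ S) (hv : v ∈ S) (huv : u ≠ v)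
    (A : Finset V) (hAu : u ∈ A) (hAv : v ∉ A)
    (hclosed : ∀ x y : V, x ∈ A → y ∉ A → x ∈ S → y ∈ S → x ≠ y → ¬ (w s(x,y) < w s(u,v))) :
    s(u,v) ∈ mstEdges w S := by
  classical
  obtain ⟨T, hT, hmin⟩ := exists_minSpanningTree S ⟨u, hu⟩ w
  refine ⟨T, hT, hmin, ?_⟩
  by_contra hne
  obtain ⟨wk⟩ := hT.2.1 u hu v hv
  let p := wk.toPath
  have hpe : ∀ e ∈ (p : (fromEdgeSet (↑T : Set (Sym2 V))).Walk u v).edges, e ∈ T ∧ ¬ e.IsDiag := by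
    intro e he
    have := Walk.edges_subset_edgeSet _ he
    rw [edgeSet_fromEdgeSet] at this
    exact ⟨this.1, this.2⟩
  obtain ⟨x, y, hx, hy, hxy, w₁, w₂, he₁, he₂, hn₁, hn₂⟩ :=
    exists_crossing_edge (p : (fromEdgeSet (↑T : Set (Sym2 V))).Walk u v) p.2 (↑A) hAu hAv
  have hfT : s(x,y) ∈ T := (hpe _ hxy).1
  have hxyne : x ≠ y := fun h => (hpe _ hxy).2 (by simp [h])
  have hxS : x ∈ S := (hT.1 _ hfT).2 x (by simp)
  have hyS : y ∈ S := (hT.1 _ hfT).2 y (by simp)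
  have hwlt : w s(u,v) < w s(x,y) := by
    have h1 : ¬ (w s(x,y) < w s(u,v)) := hclosed x y hx hy hxS hyS hxyne
    have h2 : w s(x,y) ≠ w s(u,v) := by
      intro heq
      exact hne (hinj _ _ (by simp [hxyne]) (by simp [huv]) heq ▸ hfT)
    cases lt_or_eq_of_le (not_lt.mp h1) with
    | inl h => exact h
    | inr h => exact absurd h.symm h2
  -- exchange
  set T' : Finset (Sym2 V) := insert s(u,v) (T.erase s(x,y)) with hT'def
  have hsub : (↑(T.erase s(x,y)) : Set (Sym2 V)) ⊆ ↑T' := by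
    intro e he; simp only [hT'def, Finset.coe_insert, Set.mem_insert_iff]; exact Or.inr he
  have hreachxy : (fromEdgeSet (↑T' : Set (Sym2 V))).Reachable x y := by
    have htr : ∀ (wq : (fromEdgeSet (↑T : Set (Sym2 V))).Walk u x) ,
        (∀ e ∈ wq.edges, e ∈ (p : (fromEdgeSet (↑T : Set (Sym2 V))).Walk u v).edges) →
        s(x,y) ∉ wq.edges → (fromEdgeSet (↑T' : Set (Sym2 V))).Reachable u x := by
      intro wq hq hnq
      refine ⟨wq.transfer _ ?_⟩
      intro e he
      rw [edgeSet_fromEdgeSet]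
      refine ⟨hsub (Finset.mem_coe.mpr (Finset.mem_erase.mpr ⟨?_, (hpe e (hq e he)).1⟩)), (hpe e (hq e he)).2⟩
      intro h; exact hnq (h ▸ he)
    have h1 : (fromEdgeSet (↑T' : Set (Sym2 V))).Reachable u x := htr w₁ he₁ hn₁
    have htr2 : (fromEdgeSet (↑T' : Set (Sym2 V))).Reachable y v := by
      refine ⟨w₂.transfer _ ?_⟩
      intro e he
      rw [edgeSet_fromEdgeSet]
      refine ⟨hsub (Finset.mem_coe.mpr (Finset.mem_erase.mpr ⟨?_, (hpe e (he₂ e he)).1⟩)), (hpe e (he₂ e he)).2⟩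
      intro h; exact hn₂ (h ▸ he)
    have huvadj : (fromEdgeSet (↑T' : Set (Sym2 V))).Adj u v := by
      rw [fromEdgeSet_adj]
      exact ⟨by simp [hT'def], huv⟩
    exact (h1.symm.trans huvadj.reachable).trans htr2.symm
  have hnotmem : s(u,v) ∉ T.erase s(x,y) := fun h => hne (Finset.mem_of_mem_erase h)
  have hT'tree : IsSpanningTreeOn S T' := by
    refine ⟨?_, ?_, ?_⟩
    · intro e he
      rcases Finset.mem_insert.mp he with rfl | he
      · exact ⟨by simp [huv], by intro z hz; rcases Sym2.mem_iff.mp hz with rfl | rfl <;> assumption⟩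
      · have := hT.1 e (Finset.mem_of_mem_erase he)
        exact this
    · intro a ha b hb
      refine reachable_of_forall_edge' ?_ (hT.2.1 a ha b hb)
      intro s t hst hstne
      by_cases hf : s(s,t) = s(x,y)
      · rcases Sym2.eq_iff.mp hf with ⟨rfl, rfl⟩ | ⟨rfl, rfl⟩
        · exact hreachxy
        · exact hreachxy.symm
      · refine Adj.reachable ?_
        rw [fromEdgeSet_adj]
        exact ⟨hsub (Finset.mem_coe.mpr (Finset.mem_erase.mpr ⟨hf, hst⟩)), hstne⟩
    · rw [hT'def, Finset.card_insert_of_notMem hnotmem, Finset.card_erase_of_mem hfT]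
      have h1 : 1 ≤ T.card := Finset.card_pos.mpr ⟨_, hfT⟩
      have hc := hT.2.2
      omega
  have hsum : T'.sum w < T.sum w := by
    rw [hT'def, Finset.sum_insert hnotmem]
    have := Finset.add_sum_erase T w hfT
    linarith [this]
  exact absurd (hmin T' hT'tree) (not_le.mpr hsum)


section Ctr
variable [DecidableEq V]

/-- contraction map collapsing `y` onto `x`. -/
def ctr (x y : V) : V → V := fun z => if z = y then x else z

@[simp] lemma ctr_y {x y : V} : ctr x y y = x := by simp [ctr]

lemma ctr_of_ne {x y z : V} (h : z ≠ y) : ctr x y z = z := by simp [ctr, h]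

lemma ctr_eq_or {x y z : V} : ctr x y z = z ∨ (z = y ∧ ctr x y z = x) := by
  by_cases h : z = y
  · exact Or.inr ⟨h, by simp [h]⟩
  · exact Or.inl (ctr_of_ne h)

/-- the contraction of `G` along the pair `x y`. -/
def Gc (G : SimpleGraph V) (x y : V) : SimpleGraph V where
  Adj a b := a ≠ b ∧ ∃ a' b', ctr x y a' = a ∧ ctr x y b' = b ∧ G.Adj a' b'
  symm := ⟨by rintro a b ⟨h, a', b', ha, hb, hadj⟩; exact ⟨h.symm, b', a', hb, ha, hadj.symm⟩⟩
  loopless := ⟨by rintro a ⟨h, _⟩; exact h rfl⟩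

lemma ctr_eq_ctr_adj {G : SimpleGraph V} {x y a b : V} (hxy : G.Adj x y)
    (h : ctr x y a = ctr x y b) (hne : a ≠ b) : G.Adj a b := by
  rcases ctr_eq_or (x := x) (y := y) (z := a) with ha | ⟨ha, ha'⟩ <;>
    rcases ctr_eq_or (x := x) (y := y) (z := b) with hb | ⟨hb, hb'⟩
  · exact absurd (ha ▸ hb ▸ h) hne
  · subst hb; rw [ha, hb'] at h; subst h; exact hxy
  · subst ha; rw [hb, ha'] at h; rw [← h]; exact hxy.symm
  · subst ha; subst hb; exact absurd rfl hne

/-- projecting a walk through the contraction. -/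
lemma walk_proj {G : SimpleGraph V} {x y : V} {a b : V} (w : G.Walk a b) :
    ∃ q : (Gc G x y).Walk (ctr x y a) (ctr x y b),
      ∀ z ∈ q.support, ∃ z' ∈ w.support, ctr x y z' = z := by
  induction w with
  | nil => exact ⟨.nil, by intro z hz; simp at hz; exact ⟨_, by simp, hz.symm⟩⟩
  | @cons u v b hadj p ih =>
      obtain ⟨q', hq'⟩ := ih
      by_cases h : ctr x y u = ctr x y v
      · refine ⟨q'.copy h.symm rfl, ?_⟩
        intro z hz
        rw [Walk.support_copy] at hz
        obtain ⟨z', hz', hzz⟩ := hq' z hz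
        exact ⟨z', by simp [hz'], hzz⟩
      · refine ⟨.cons (show (Gc G x y).Adj _ _ from ⟨h, u, v, rfl, rfl, hadj⟩) q', ?_⟩
        intro z hz
        rw [Walk.support_cons, List.mem_cons] at hz
        rcases hz with rfl | hz
        · exact ⟨u, by simp, rfl⟩
        · obtain ⟨z', hz', hzz⟩ := hq' z hz
          exact ⟨z', by simp [hz'], hzz⟩

/-- lifting a walk through the contraction. -/
lemma walk_lift {G : SimpleGraph V} {x y : V} (hxy : G.Adj x y) {a b : V}
    (w : (Gc G x y).Walk a b) :
    ∀ a', ctr x y a' = a → ∃ b', ctr x y b' = b ∧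
      ∃ q : G.Walk a' b', ∀ z ∈ q.support, ctr x y z ∈ w.support := by
  induction w with
  | nil =>
      intro a' ha'
      exact ⟨a', ha', .nil, by intro z hz; simp at hz; subst hz; simp [ha']⟩
  | @cons u v b hadj p ih =>
      intro a' ha'
      obtain ⟨hne, a₀, c₀, ha₀, hc₀, hadj₀⟩ := hadj
      have step : ∃ q₀ : G.Walk a' c₀, ∀ z ∈ q₀.support, ctr x y z = u ∨ ctr x y z = v := by
        by_cases h : a' = a₀
        · subst h
          refine ⟨.cons hadj₀ .nil, ?_⟩
          intro z hz
          rw [Walk.support_cons, List.mem_cons] at hz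
          rcases hz with rfl | hz
          · exact Or.inl ha'
          · simp at hz; subst hz; exact Or.inr hc₀
        · have hadj' : G.Adj a' a₀ := ctr_eq_ctr_adj hxy (ha' ▸ ha₀.symm ▸ rfl) h
          refine ⟨.cons hadj' (.cons hadj₀ .nil), ?_⟩
          intro z hz
          rw [Walk.support_cons, List.mem_cons] at hz
          rcases hz with rfl | hz
          · exact Or.inl ha'
          rw [Walk.support_cons, List.mem_cons] at hz
          rcases hz with rfl | hz
          · exact Or.inl (ha₀ ▸ rfl)
          · simp at hz; subst hz; exact Or.inr hc₀
      obtain ⟨q₀, hq₀⟩ := step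
      obtain ⟨b', hb', q, hq⟩ := ih c₀ hc₀
      refine ⟨b', hb', q₀.append q, ?_⟩
      intro z hz
      rw [Walk.support_append, List.mem_append] at hz
      rcases hz with hz | hz
      · rcases hq₀ z hz with h | h
        · rw [h]; simp
        · rw [h]; erw [Walk.support_cons]; exact List.mem_cons_of_mem _ (Walk.start_mem_support p)
      · have := hq z (List.mem_of_mem_tail hz)
        erw [Walk.support_cons]; exact List.mem_cons_of_mem _ this

end Ctr

section EM
variable [Fintype V] [DecidableEq V]

/-- number of edges (classical). -/
noncomputable def em (G : SimpleGraph V) : ℕ :=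
  (@Finset.filter _ (fun e => e ∈ G.edgeSet) (Classical.decPred _) Finset.univ).card

lemma em_lt_of_lt {G H : SimpleGraph V} (hle : H ≤ G) {e : Sym2 V}
    (heG : e ∈ G.edgeSet) (heH : e ∉ H.edgeSet) : em H < em G := by
  classical
  apply Finset.card_lt_card
  rw [Finset.ssubset_iff_of_subset]
  · exact ⟨e, by simpa using heG, by simpa using heH⟩
  · intro f hf
    simp only [Finset.mem_filter, Finset.mem_univ, true_and] at hf ⊢
    exact edgeSet_mono hle hf

lemma em_ctr_lt {G : SimpleGraph V} {x y : V} (hxy : G.Adj x y) :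
    em (Gc G x y) < em G := by
  classical
  have key : (@Finset.filter _ (fun e => e ∈ (Gc G x y).edgeSet) (Classical.decPred _) Finset.univ)
      ⊆ ((@Finset.filter _ (fun e => e ∈ G.edgeSet) (Classical.decPred _) Finset.univ).image
          (Sym2.map (ctr x y))).erase s(x,x) := by
    intro e he
    simp only [Finset.mem_filter, Finset.mem_univ, true_and] at he
    induction e using Sym2.ind with
    | _ a b =>
      obtain ⟨hne, a', b', ha', hb', hadj⟩ := he
      rw [Finset.mem_erase]
      constructor
      · intro h
        rw [Sym2.eq_iff] at h
        rcases h with ⟨h1, h2⟩ | ⟨h1, h2⟩ <;> exact hne (h1.trans h2.symm)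
      · rw [Finset.mem_image]
        exact ⟨s(a', b'), by simpa using hadj, by simp [Sym2.map_pair_eq, ha', hb']⟩
  have h1 := Finset.card_le_card key
  have h2 : s(x,x) ∈ (@Finset.filter _ (fun e => e ∈ G.edgeSet) (Classical.decPred _) Finset.univ).image
      (Sym2.map (ctr x y)) := by
    rw [Finset.mem_image]
    refine ⟨s(x,y), by simpa using hxy, by simp [Sym2.map_pair_eq, ctr_of_ne hxy.ne]⟩
  have h3 := Finset.card_erase_of_mem h2
  have h4 := Finset.card_image_le (s := (@Finset.filter _ (fun e => e ∈ G.edgeSet) (Classical.decPred _) Finset.univ)) (f := Sym2.map (ctr x y))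
  have h5 : 0 < ((@Finset.filter _ (fun e => e ∈ G.edgeSet) (Classical.decPred _) Finset.univ).image (Sym2.map (ctr x y))).card :=
    Finset.card_pos.mpr ⟨_, h2⟩
  unfold em
  omega

end EM


lemma support_mapLe {G G' : SimpleGraph V} (h : G ≤ G') {a b : V} (p : G.Walk a b) :
    (p.mapLe h).support = p.support := by
  have hid : ⇑(Hom.ofLE h) = id := rfl
  simp [SimpleGraph.Walk.mapLe, SimpleGraph.Walk.support_map, hid, List.map_id]

lemma isPath_mapLe {G G' : SimpleGraph V} (h : G ≤ G') {a b : V} (p : G.Walk a b)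
    (hp : p.IsPath) : (p.mapLe h).IsPath := by
  rw [SimpleGraph.Walk.isPath_def, support_mapLe]
  exact hp.support_nodup

lemma endpoint_not_mem_takeUntil [DecidableEq V] {G : SimpleGraph V} {a c : V}
    {p : G.Walk a c} (hp : p.IsPath) {z : V} (hz : z ∈ p.support) (hzc : z ≠ c) :
    c ∉ (p.takeUntil z hz).support := by
  have hnd : p.support.Nodup := hp.support_nodup
  conv at hnd => rw [← p.take_spec hz]
  rw [Walk.support_append] at hnd
  have hdisj := List.disjoint_of_nodup_append hnd
  intro hc
  refine hdisj hc ?_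
  have h1 : c ∈ (p.dropUntil z hz).support := Walk.end_mem_support _
  rw [Walk.support_eq_cons] at h1
  rcases List.mem_cons.mp h1 with h | h
  · exact absurd h.symm hzc
  · exact h

lemma exists_adj_of_edgeSet_nonempty {G : SimpleGraph V} (h : G.edgeSet.Nonempty) :
    ∃ x y, G.Adj x y := by
  obtain ⟨e, he⟩ := h
  induction e using Sym2.ind with
  | _ x y => exact ⟨x, y, he⟩

theorem mengerAux [Fintype V] [DecidableEq V] :
    ∀ n : ℕ, ∀ G : SimpleGraph V, em G < n → ∀ (A B : Finset V) (k : ℕ),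
      (∀ T, Sep G A B T → k ≤ T.card) → HasAB G A B k := by
  intro n
  induction n with
  | zero => intro G h; omega
  | succ n ih =>
    intro G hGn A B k hsep
    by_cases hE : G.edgeSet = ∅
    · -- base case: no edges
      have hsepAB : Sep G A B (A ∩ B) := by
        intro a ha b hb p
        have hab : a = b := eq_of_walk_edgeSet_empty p hE
        exact ⟨a, Finset.mem_inter.mpr ⟨ha, hab ▸ hb⟩, p.start_mem_support⟩
      obtain ⟨U, hU, hUcard⟩ := Finset.exists_subset_card_eq (hsep _ hsepAB)
      have equ := Finset.equivFinOfCardEq hUcard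
      refine ⟨fun i => (equ.symm i : V), fun i => (equ.symm i : V), fun i => .nil,
        fun i => (Finset.mem_inter.mp (hU (equ.symm i).2)).1,
        fun i => (Finset.mem_inter.mp (hU (equ.symm i).2)).2,
        fun i => Walk.IsPath.nil, ?_⟩
      intro i j hij z hzi hzj
      simp only [Walk.support_nil, List.mem_singleton] at hzi hzj
      apply hij
      have : (equ.symm i : V) = (equ.symm j : V) := by rw [← hzi, hzj]
      have h2 : equ.symm i = equ.symm j := Subtype.ext this
      exact equ.symm.injective h2
    · obtain ⟨x, y, hxy⟩ := exists_adj_of_edgeSet_nonempty (Set.nonempty_iff_ne_empty.mpr hE)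
      by_cases hc : ∀ T, Sep (Gc G x y) (A.image (ctr x y)) (B.image (ctr x y)) T → k ≤ T.card
      · -- contraction case
        have hGClt : em (Gc G x y) < n := by
          have := em_ctr_lt hxy; omega
        obtain ⟨α, β, P, hαA, hβB, hPpath, hPdisj⟩ := ih (Gc G x y) hGClt _ _ k hc
        have H : ∀ i, ∃ (a' b' : V) (q : G.Walk a' b'), a' ∈ A ∧ b' ∈ B ∧ q.IsPath ∧
            ∀ z ∈ q.support, ctr x y z ∈ (P i).support := by
          intro i
          obtain ⟨a', ha'A, ha'⟩ := Finset.mem_image.mp (hαA i)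
          obtain ⟨b', hb', q, hq⟩ := walk_lift hxy (P i) a' ha'
          obtain ⟨b₀, hb₀B, hb₀⟩ := Finset.mem_image.mp (hβB i)
          by_cases hbb : b' ∈ B
          · refine ⟨a', b', q.toPath, ha'A, hbb, q.toPath.2, ?_⟩
            intro z hz
            exact hq z (Walk.support_toPath_subset q hz)
          · have hne : b' ≠ b₀ := fun h => hbb (h ▸ hb₀B)
            have hadj : G.Adj b' b₀ := ctr_eq_ctr_adj hxy (by rw [hb', hb₀]) hne
            refine ⟨a', b₀, (q.concat hadj).toPath, ha'A, hb₀B, (q.concat hadj).toPath.2, ?_⟩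
            intro z hz
            have hz' := Walk.support_toPath_subset _ hz
            rw [Walk.support_concat] at hz'
            rw [List.mem_append, List.mem_singleton] at hz'
            rcases hz' with h | h
            · exact hq z h
            · subst h
              rw [hb₀]
              exact Walk.end_mem_support _
        choose a' b' q hA hB hP hS using H
        exact ⟨a', b', q, hA, hB, hP, fun i j hij z hzi hzj =>
          hPdisj i j hij (ctr x y z) (hS i z hzi) (hS j z hzj)⟩
      · -- deletion case
        push_neg at hc
        obtain ⟨Y, hYsep, hYlt⟩ := hc
        have hxY : x ∈ Y := by
          by_contra hxY
          have hsY : Sep G A B Y := by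
            intro a ha b hb p
            obtain ⟨qq, hq⟩ := walk_proj (x := x) (y := y) p
            obtain ⟨t, htY, hts⟩ := hYsep (Finset.mem_image_of_mem _ ha)
              (Finset.mem_image_of_mem _ hb) qq
            obtain ⟨z', hz', hzt⟩ := hq t hts
            rcases ctr_eq_or (x := x) (y := y) (z := z') with h | ⟨h, h'⟩
            · have hzz : z' = t := by rw [← hzt, h]
              exact ⟨t, htY, hzz ▸ hz'⟩
            · have : t = x := by rw [← hzt, h']
              exact absurd (this ▸ htY) hxY
          have := hsep Y hsY
          omega
        set S : Finset V := insert y Y with hSdef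
        have hxS : x ∈ S := Finset.mem_insert_of_mem hxY
        have hyS : y ∈ S := Finset.mem_insert_self y Y
        have hSsep : Sep G A B S := by
          intro a ha b hb p
          obtain ⟨qq, hq⟩ := walk_proj (x := x) (y := y) p
          obtain ⟨t, htY, hts⟩ := hYsep (Finset.mem_image_of_mem _ ha)
            (Finset.mem_image_of_mem _ hb) qq
          obtain ⟨z', hz', hzt⟩ := hq t hts
          rcases ctr_eq_or (x := x) (y := y) (z := z') with h | ⟨h, h'⟩
          · have hzz : z' = t := by rw [← hzt, h]
            exact ⟨t, Finset.mem_insert_of_mem htY, hzz ▸ hz'⟩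
          · exact ⟨y, hyS, h ▸ hz'⟩
        have hSk : S.card = k := by
          have h1 := hsep S hSsep
          have h2 : S.card ≤ Y.card + 1 := by
            rw [hSdef]; exact Finset.card_insert_le y Y
          omega
        have hxyne : x ≠ y := hxy.ne
        set G' := G.deleteEdges {s(x,y)} with hG'def
        have hG'le : G' ≤ G := deleteEdges_le _
        have hG'edge : G'.edgeSet = G.edgeSet \ {s(x,y)} := edgeSet_deleteEdges _
        have hG'lt : em G' < n := by
          have : em G' < em G := by
            refine em_lt_of_lt hG'le (G.mem_edgeSet.mpr hxy) ?_
            rw [hG'edge]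
            simp
          omega
        -- every A–S separator of G' separates A,B in G
        have hAS : ∀ T, Sep G' A S T → k ≤ T.card := by
          intro T hT
          apply hsep
          intro a ha b hb p
          have hhit : ∃ z ∈ p.support, z ∈ (↑S : Set V) := by
            obtain ⟨t, htS, hts⟩ := hSsep ha hb p
            exact ⟨t, hts, htS⟩
          obtain ⟨s, w', hsS, hsub, hfirst⟩ := exists_prefix_firstHit p (↑S) hhit
          have hw'G' : ∀ eu ∈ w'.edges, eu ∈ G'.edgeSet := by
            intro eu heu
            rw [hG'edge]
            refine ⟨Walk.edges_subset_edgeSet _ heu, ?_⟩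
            intro hcontra
            rw [Set.mem_singleton_iff] at hcontra
            subst hcontra
            have hx' : x ∈ w'.support := Walk.fst_mem_support_of_mem_edges _ heu
            have hy' : y ∈ w'.support := Walk.snd_mem_support_of_mem_edges _ heu
            have e1 := hfirst x hx' (Finset.mem_coe.mpr hxS)
            have e2 := hfirst y hy' (Finset.mem_coe.mpr hyS)
            exact hxyne (e1.trans e2.symm)
          obtain ⟨t, htT, hts⟩ := hT ha (Finset.mem_coe.mp hsS) (w'.transfer G' hw'G')
          rw [Walk.support_transfer] at hts
          exact ⟨t, htT, hsub t hts⟩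
        -- every S–B separator of G' separates A,B in G
        have hSB : ∀ T, Sep G' S B T → k ≤ T.card := by
          intro T hT
          apply hsep
          intro a ha b hb p
          have hhit : ∃ z ∈ p.reverse.support, z ∈ (↑S : Set V) := by
            obtain ⟨t, htS, hts⟩ := hSsep ha hb p
            rw [Walk.support_reverse]
            exact ⟨t, List.mem_reverse.mpr hts, htS⟩
          obtain ⟨s, w', hsS, hsub, hfirst⟩ := exists_prefix_firstHit p.reverse (↑S) hhit
          have hw'G' : ∀ eu ∈ w'.edges, eu ∈ G'.edgeSet := by
            intro eu heu
            rw [hG'edge]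
            refine ⟨Walk.edges_subset_edgeSet _ heu, ?_⟩
            intro hcontra
            rw [Set.mem_singleton_iff] at hcontra
            subst hcontra
            have hx' : x ∈ w'.support := Walk.fst_mem_support_of_mem_edges _ heu
            have hy' : y ∈ w'.support := Walk.snd_mem_support_of_mem_edges _ heu
            have e1 := hfirst x hx' (Finset.mem_coe.mpr hxS)
            have e2 := hfirst y hy' (Finset.mem_coe.mpr hyS)
            exact hxyne (e1.trans e2.symm)
          obtain ⟨t, htT, hts⟩ := hT (Finset.mem_coe.mp hsS) hb ((w'.transfer G' hw'G').reverse)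
          rw [Walk.support_reverse, List.mem_reverse, Walk.support_transfer] at hts
          have := hsub t hts
          rw [Walk.support_reverse, List.mem_reverse] at this
          exact ⟨t, htT, this⟩
        obtain ⟨α₁, σ₀, P₀, hα₁A, hσ₀S, hP₀path, hP₀disj⟩ := ih G' hG'lt A S k hAS
        obtain ⟨τ₀, β₁, Q₀, hτ₀S, hβ₁B, hQ₀path, hQ₀disj⟩ := ih G' hG'lt S B k hSB
        -- trim the A-side system at the first S hit
        have HA : ∀ i, ∃ (s : V) (qq : G'.Walk (α₁ i) s), s ∈ S ∧ qq.IsPath ∧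
            (∀ z ∈ qq.support, z ∈ (P₀ i).support) ∧
            (∀ z ∈ qq.support, z ∈ (↑S : Set V) → z = s) := by
          intro i
          obtain ⟨s, w', hs, hsub, hfirst⟩ := exists_prefix_firstHit (P₀ i) (↑S)
            ⟨σ₀ i, Walk.end_mem_support _, Finset.mem_coe.mpr (hσ₀S i)⟩
          refine ⟨s, w'.toPath, Finset.mem_coe.mp hs, w'.toPath.2, ?_, ?_⟩
          · intro z hz
            exact hsub z (Walk.support_toPath_subset w' hz)
          · intro z hz hzS
            exact hfirst z (Walk.support_toPath_subset w' hz) hzS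
        choose σ P hσS hPpath hPsub hPfirst using HA
        -- trim the B-side system at the last S hit
        have HB : ∀ i, ∃ (t : V) (qq : G'.Walk t (β₁ i)), t ∈ S ∧ qq.IsPath ∧
            (∀ z ∈ qq.support, z ∈ (Q₀ i).support) ∧
            (∀ z ∈ qq.support, z ∈ (↑S : Set V) → z = t) := by
          intro i
          obtain ⟨t, w', ht, hsub, hfirst⟩ := exists_prefix_firstHit (Q₀ i).reverse (↑S)
            ⟨τ₀ i, by rw [Walk.support_reverse]; exact List.mem_reverse.mpr (Walk.start_mem_support _), Finset.mem_coe.mpr (hτ₀S i)⟩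
          refine ⟨t, (w'.toPath : G'.Walk (β₁ i) t).reverse, Finset.mem_coe.mp ht,
            (w'.toPath.2).reverse, ?_, ?_⟩
          · intro z hz
            rw [Walk.support_reverse, List.mem_reverse] at hz
            have := hsub z (Walk.support_toPath_subset w' hz)
            rw [Walk.support_reverse, List.mem_reverse] at this
            exact this
          · intro z hz hzS
            rw [Walk.support_reverse, List.mem_reverse] at hz
            exact hfirst z (Walk.support_toPath_subset w' hz) hzS
        choose τ Q hτS hQpath hQsub hQfirst using HB
        -- disjointness of trimmed systems
        have hPd : ∀ i j, i ≠ j → ∀ z, z ∈ (P i).support → z ∈ (P j).support → False :=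
          fun i j hij z hzi hzj => hP₀disj i j hij z (hPsub i z hzi) (hPsub j z hzj)
        have hQd : ∀ i j, i ≠ j → ∀ z, z ∈ (Q i).support → z ∈ (Q j).support → False :=
          fun i j hij z hzi hzj => hQ₀disj i j hij z (hQsub i z hzi) (hQsub j z hzj)
        -- σ and τ are injective with image S
        have hσinj : Function.Injective σ := by
          intro i j hij
          by_contra hne
          refine hPd i j hne (σ i) (Walk.end_mem_support _) ?_
          rw [hij]
          exact Walk.end_mem_support (P j)
        have hτinj : Function.Injective τ := by
          intro i j hij
          by_contra hne
          refine hQd i j hne (τ i) (Walk.start_mem_support _) ?_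
          rw [hij]
          exact Walk.start_mem_support (Q j)
        have hσim : Finset.univ.image σ = S := by
          apply Finset.eq_of_subset_of_card_le
          · intro s hs
            obtain ⟨i, _, rfl⟩ := Finset.mem_image.mp hs
            exact hσS i
          · rw [Finset.card_image_of_injective _ hσinj, Finset.card_univ, Fintype.card_fin, hSk]
        have hτim : Finset.univ.image τ = S := by
          apply Finset.eq_of_subset_of_card_le
          · intro s hs
            obtain ⟨i, _, rfl⟩ := Finset.mem_image.mp hs
            exact hτS i
          · rw [Finset.card_image_of_injective _ hτinj, Finset.card_univ, Fintype.card_fin, hSk]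
        have hρex : ∀ i, ∃ j, τ j = σ i := by
          intro i
          have : σ i ∈ Finset.univ.image τ := by
            rw [hτim]; exact hσS i
          obtain ⟨j, _, hj⟩ := Finset.mem_image.mp this
          exact ⟨j, hj⟩
        choose ρ hρ using hρex
        have hρinj : Function.Injective ρ := by
          intro i j hij
          apply hσinj
          rw [← hρ i, ← hρ j, hij]
        -- key disjointness lemma
        have hKey : ∀ i j z, z ∈ (P i).support → z ∈ (Q j).support → z = σ i ∧ z = τ j := by
          intro i j z hzP hzQ
          by_cases hzS : z ∈ (↑S : Set V)
          · exact ⟨hPfirst i z hzP hzS, hQfirst j z hzQ hzS⟩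
          · exfalso
            have hzσ : z ≠ σ i := fun h => hzS (h ▸ Finset.mem_coe.mpr (hσS i))
            have hzτ : z ≠ τ j := fun h => hzS (h ▸ Finset.mem_coe.mpr (hτS j))
            have hσnot : σ i ∉ ((P i).takeUntil z hzP).support :=
              endpoint_not_mem_takeUntil (hPpath i) hzP hzσ
            have hzQr : z ∈ (Q j).reverse.support := by
              rw [Walk.support_reverse]; exact List.mem_reverse.mpr hzQ
            have hτnot : τ j ∉ ((Q j).reverse.takeUntil z hzQr).reverse.support := by
              rw [Walk.support_reverse, List.mem_reverse]
              exact endpoint_not_mem_takeUntil ((hQpath j).reverse) hzQr hzτ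
            set w₁ := (P i).takeUntil z hzP with hw₁def
            set w₂ := ((Q j).reverse.takeUntil z hzQr).reverse with hw₂def
            have hw₁S : ∀ u ∈ w₁.support, u ∉ (↑S : Set V) := by
              intro u hu huS
              have heq := hPfirst i u (Walk.support_takeUntil_subset _ _ hu) huS
              rw [heq] at hu
              exact hσnot hu
            have hw₂S : ∀ u ∈ w₂.support, u ∉ (↑S : Set V) := by
              intro u hu huS
              have hu' : u ∈ (Q j).support := by
                have h0 : u ∈ ((Q j).reverse.takeUntil z hzQr).support := by
                  rw [hw₂def, Walk.support_reverse, List.mem_reverse] at hu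
                  exact hu
                have := Walk.support_takeUntil_subset _ hzQr h0
                rw [Walk.support_reverse, List.mem_reverse] at this
                exact this
              have heq := hQfirst j u hu' huS
              rw [heq] at hu
              exact hτnot hu
            obtain ⟨t, htS, hts⟩ := hSsep (hα₁A i) (hβ₁B j) ((w₁.append w₂).mapLe hG'le)
            rw [support_mapLe, Walk.support_append, List.mem_append] at hts
            rcases hts with h | h
            · exact hw₁S t h (Finset.mem_coe.mpr htS)
            · exact hw₂S t (List.mem_of_mem_tail h) (Finset.mem_coe.mpr htS)
        -- glue
        have hglue : ∀ i, ∃ R : G'.Walk (α₁ i) (β₁ (ρ i)), R.IsPath ∧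
            (∀ z ∈ R.support, z ∈ (P i).support ∨ z ∈ (Q (ρ i)).support) := by
          intro i
          set Q' := (Q (ρ i)).copy (hρ i) rfl with hQ'def
          have hQ'supp : Q'.support = (Q (ρ i)).support := by
            rw [hQ'def, Walk.support_copy]
          have hheadtail : (Q (ρ i)).support = τ (ρ i) :: (Q (ρ i)).support.tail :=
            Walk.support_eq_cons _
          have hheadnotin : τ (ρ i) ∉ (Q (ρ i)).support.tail := by
            have := (hQpath (ρ i)).support_nodup
            rw [hheadtail] at this
            exact (List.nodup_cons.mp this).1
          refine ⟨(P i).append Q', ?_, ?_⟩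
          · rw [Walk.isPath_def, Walk.support_append]
            refine List.Nodup.append (hPpath i).support_nodup ?_ ?_
            · rw [hQ'supp]
              exact (hQpath (ρ i)).support_nodup.tail
            · intro z hzP hzQt
              rw [hQ'supp] at hzQt
              have hzQ : z ∈ (Q (ρ i)).support := List.mem_of_mem_tail hzQt
              have := (hKey i (ρ i) z hzP hzQ).2
              exact hheadnotin (this ▸ hzQt)
          · intro z hz
            rw [Walk.support_append] at hz
            rcases List.mem_append.mp hz with h | h
            · exact Or.inl h
            · right
              rw [hQ'supp] at h
              exact List.mem_of_mem_tail h
        choose R hRpath hRsub using hglue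
        refine ⟨α₁, fun i => β₁ (ρ i), fun i => (R i).mapLe hG'le, hα₁A,
          fun i => hβ₁B (ρ i), fun i => isPath_mapLe hG'le _ (hRpath i), ?_⟩
        intro i j hij z hzi hzj
        rw [support_mapLe] at hzi hzj
        rcases hRsub i z hzi with h1 | h1 <;> rcases hRsub j z hzj with h2 | h2
        · exact hPd i j hij z h1 h2
        · have hk := hKey i (ρ j) z h1 h2
          have : σ i = σ j := by rw [← hk.1, hk.2, hρ j]
          exact hij (hσinj this)
        · have hk := hKey j (ρ i) z h2 h1
          have : σ j = σ i := by rw [← hk.1, hk.2, hρ i]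
          exact hij (hσinj this.symm)
        · exact hQd (ρ i) (ρ j) (fun h => hij (hρinj h)) z h1 h2
theorem mengerSet [Fintype V] [DecidableEq V] {G : SimpleGraph V} {A B : Finset V} {k : ℕ}
    (h : ∀ T, Sep G A B T → k ≤ T.card) : HasAB G A B k :=
  mengerAux (em G + 1) G (by omega) A B k h



lemma mem_edge_of_mem_support {G : SimpleGraph V} {a b t : V} (w : G.Walk a b)
    (h : t ∈ w.support) : t = a ∨ ∃ e ∈ w.edges, t ∈ e := by
  induction w with
  | nil => simp at h; exact Or.inl h
  | @cons x c b hadj p ih =>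
      rw [Walk.support_cons, List.mem_cons] at h
      rcases h with rfl | h
      · exact Or.inl rfl
      · rcases ih h with rfl | ⟨e, he, hte⟩
        · exact Or.inr ⟨s(x, t), by simp, by simp⟩
        · exact Or.inr ⟨e, by simp [he], hte⟩

/-- peel the first step off a nontrivial path. -/
lemma path_first_step {G : SimpleGraph V} {a b : V} (p : G.Walk a b) (hp : p.IsPath)
    (hab : a ≠ b) :
    ∃ (c : V) (m : G.Walk c b), G.Adj a c ∧ m.IsPath ∧ a ∉ m.support ∧
      ∀ z ∈ m.support, z ∈ p.support := by
  cases p with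
  | nil => exact absurd rfl hab
  | @cons _ c _ h₁ p₁ =>
      exact ⟨c, p₁, h₁, hp.of_cons, ((Walk.cons_isPath_iff h₁ p₁).mp hp).2,
        fun z hz => by rw [Walk.support_cons]; exact List.mem_cons_of_mem _ hz⟩

/-- extract the middle of a `u`–`v` path, avoiding `u` and `v`. -/
lemma path_middle {G : SimpleGraph V} {u v : V} (p : G.Walk u v) (hp : p.IsPath)
    (huv : u ≠ v) (hadj : ¬ G.Adj u v) :
    ∃ (c d : V) (m : G.Walk c d), G.Adj u c ∧ G.Adj v d ∧ u ∉ m.support ∧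
      v ∉ m.support ∧ ∀ z ∈ m.support, z ∈ p.support := by
  obtain ⟨c, m, hac, hmp, hum, hmsub⟩ := path_first_step p hp huv
  have hvc : v ≠ c := by
    intro h
    exact hadj (h ▸ hac)
  obtain ⟨d, m₂, hvd, _, hvm₂, hm₂sub⟩ := path_first_step m.reverse hmp.reverse hvc
  refine ⟨c, d, m₂.reverse, hac, hvd, ?_, ?_, ?_⟩
  · intro hu
    rw [Walk.support_reverse, List.mem_reverse] at hu
    have := hm₂sub u hu
    rw [Walk.support_reverse, List.mem_reverse] at this
    exact hum this
  · intro hv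
    rw [Walk.support_reverse, List.mem_reverse] at hv
    exact hvm₂ hv
  · intro z hz
    rw [Walk.support_reverse, List.mem_reverse] at hz
    have := hm₂sub z hz
    rw [Walk.support_reverse, List.mem_reverse] at this
    exact hmsub z this

/-- Menger, internally disjoint version (separator form). -/
lemma exists_separator [Fintype V] [DecidableEq V] {G : SimpleGraph V} {u v : V} {k : ℕ}
    (huv : u ≠ v) (hadj : ¬ G.Adj u v) (h : ¬ HasDisjointPaths G u v k) :
    ∃ X : Finset V, X.card < k ∧ u ∉ X ∧ v ∉ X ∧
      ∀ p : G.Walk u v, ∃ t ∈ X, t ∈ p.support := by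
  classical
  set H := G.deleteEdges {e : Sym2 V | u ∈ e ∨ v ∈ e} with hHdef
  have hHle : H ≤ G := deleteEdges_le _
  have hHedge : H.edgeSet = G.edgeSet \ {e : Sym2 V | u ∈ e ∨ v ∈ e} := edgeSet_deleteEdges _
  have hHadj_u : ∀ c, ¬ H.Adj u c := by
    intro c hc
    have := H.mem_edgeSet.mpr hc
    rw [hHedge] at this
    exact this.2 (Or.inl (by simp))
  have hHadj_v : ∀ c, ¬ H.Adj v c := by
    intro c hc
    have := H.mem_edgeSet.mpr hc
    rw [hHedge] at this
    exact this.2 (Or.inr (by simp))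
  set A := G.neighborFinset u with hAdef
  set B := G.neighborFinset v with hBdef
  by_cases hsep : ∀ T, Sep H A B T → k ≤ T.card
  · exfalso
    apply h
    obtain ⟨a, b, p, haA, hbB, hpath, hdisj⟩ := mengerSet hsep
    have huA : ∀ i, G.Adj u (a i) := fun i => by
      have := haA i; rw [hAdef, mem_neighborFinset] at this; exact this
    have hvB : ∀ i, G.Adj v (b i) := fun i => by
      have := hbB i; rw [hBdef, mem_neighborFinset] at this; exact this
    have hunotin : ∀ i, u ∉ (p i).support := by
      intro i hu
      rcases mem_support_adj _ hu with h1 | ⟨c, hc⟩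
      · exact G.loopless.irrefl u (h1 ▸ huA i)
      · exact hHadj_u c hc
    have hvnotin : ∀ i, v ∉ (p i).support := by
      intro i hv
      rcases mem_support_adj _ hv with h1 | ⟨c, hc⟩
      · exact hadj (by rw [h1]; exact huA i)
      · exact hHadj_v c hc
    refine ⟨fun i => Walk.cons (huA i) (((p i).mapLe hHle).concat (hvB i).symm), ?_, ?_⟩
    · intro i
      rw [Walk.isPath_def, Walk.support_cons, Walk.support_concat, support_mapLe]
      rw [List.nodup_cons, List.nodup_append]
      refine ⟨?_, (hpath i).support_nodup, by simp, ?_⟩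
      · rw [List.mem_append, List.mem_singleton]
        rintro (h1 | h1)
        · exact hunotin i h1
        · exact huv h1
      · intro z hz b hb
        rw [List.mem_singleton] at hb
        subst hb
        intro h1
        exact hvnotin i (h1 ▸ hz)
    · intro i j hij x hxi hxj
      rw [Walk.support_cons, Walk.support_concat, support_mapLe,
        List.mem_cons, List.mem_append, List.mem_singleton] at hxi hxj
      rcases hxi with rfl | hxi | rfl
      · exact Or.inl rfl
      · rcases hxj with rfl | hxj | rfl
        · exact Or.inl rfl
        · exact absurd hxj (fun hh => hdisj i j hij x hxi hh)
        · exact Or.inr rfl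
      · exact Or.inr rfl
  · push_neg at hsep
    obtain ⟨T, hTsep, hTlt⟩ := hsep
    refine ⟨(T.erase u).erase v, ?_, ?_, ?_, ?_⟩
    · calc ((T.erase u).erase v).card ≤ (T.erase u).card := Finset.card_erase_le
        _ ≤ T.card := Finset.card_erase_le
        _ < k := hTlt
    · intro hu
      exact (Finset.mem_erase.mp (Finset.mem_of_mem_erase hu)).1 rfl
    · intro hv
      exact (Finset.mem_erase.mp hv).1 rfl
    · intro q
      obtain ⟨c, d, m, hac, hvd, hum, hvm, hmsub⟩ :=
        path_middle (q.toPath : G.Walk u v) q.toPath.2 huv hadj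
      have hmH : ∀ e ∈ m.edges, e ∈ H.edgeSet := by
        intro e he
        rw [hHedge]
        refine ⟨Walk.edges_subset_edgeSet _ he, ?_⟩
        rintro (hue | hve)
        · obtain ⟨z, rfl⟩ := Sym2.mem_iff_exists.mp hue
          exact hum (Walk.fst_mem_support_of_mem_edges _ he)
        · obtain ⟨z, rfl⟩ := Sym2.mem_iff_exists.mp hve
          exact hvm (Walk.fst_mem_support_of_mem_edges _ he)
      have hcA : c ∈ A := by rw [hAdef, mem_neighborFinset]; exact hac
      have hdB : d ∈ B := by rw [hBdef, mem_neighborFinset]; exact hvd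
      obtain ⟨t, htT, hts⟩ := hTsep hcA hdB (m.transfer H hmH)
      rw [Walk.support_transfer] at hts
      refine ⟨t, ?_, ?_⟩
      · rw [Finset.mem_erase, Finset.mem_erase]
        exact ⟨fun hh => hvm (hh ▸ hts), fun hh => hum (hh ▸ hts), htT⟩
      · exact Walk.support_toPath_subset q (hmsub t hts)


lemma mem_take_of_indexOf_lt [DecidableEq V] {l : List (Sym2 V)} {i : ℕ} {f : Sym2 V}
    (hf : f ∈ l) (hle : l.idxOf f < i) : f ∈ l.take i := by
  have h1 : l.idxOf f < l.length := List.idxOf_lt_length_iff.mpr hf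
  have h2 : (l.take i)[l.idxOf f]'(by simp [h1, hle]) = l[l.idxOf f] :=
    List.getElem_take
  rw [List.getElem_idxOf] at h2
  exact h2 ▸ List.getElem_mem _

section Wfun
variable [Fintype V] [DecidableEq V]

noncomputable def encV : Sym2 V → ℕ := fun f => ((Fintype.equivFin (Sym2 V)) f : ℕ)

lemma encV_inj : Function.Injective (encV (V := V)) := by
  intro a b hab
  apply (Fintype.equivFin (Sym2 V)).injective
  exact Fin.ext hab

noncomputable def wfun (l : List (Sym2 V)) (f : Sym2 V) : ℕ :=
  if f ∈ l then l.idxOf f + 1 else l.length + 1 + encV f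

lemma wfun_mem {l : List (Sym2 V)} {f : Sym2 V} (hf : f ∈ l) :
    wfun l f = l.idxOf f + 1 := if_pos hf

lemma wfun_not_mem {l : List (Sym2 V)} {f : Sym2 V} (hf : f ∉ l) :
    wfun l f = l.length + 1 + encV f := if_neg hf

lemma wfun_pos (l : List (Sym2 V)) (f : Sym2 V) : 1 ≤ wfun l f := by
  unfold wfun; split <;> omega

lemma wfun_inj (l : List (Sym2 V)) {e f : Sym2 V} (h : wfun l e = wfun l f) : e = f := by
  by_cases he : e ∈ l <;> by_cases hf : f ∈ l
  · rw [wfun_mem he, wfun_mem hf] at h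
    exact (List.idxOf_inj he).mp (by omega)
  · rw [wfun_mem he, wfun_not_mem hf] at h
    have := List.idxOf_lt_length_iff.mpr he; omega
  · rw [wfun_not_mem he, wfun_mem hf] at h
    have := List.idxOf_lt_length_iff.mpr hf; omega
  · rw [wfun_not_mem he, wfun_not_mem hf] at h
    exact encV_inj (by omega)

end Wfun


end Stmt7

open Stmt7 SimpleGraph in
/-- if `G = (V, E)` is `k`-constructible, then there are injective
positive edge weights on the complete graph on `V` such that `E ⊆ M_k(G̃)`. -/
theorem stmt_7 {V : Type*} [Fintype V] [DecidableEq V] (k : ℕ) (G : SimpleGraph V)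
    (hk1 : 1 ≤ k) (hk2 : k ≤ Fintype.card V - 1)
    (hG : IsKConstructible k G) :
    ∃ w : Sym2 V → ℝ,
      (∀ e : Sym2 V, ¬ e.IsDiag → 0 < w e) ∧
      (∀ e f : Sym2 V, ¬ e.IsDiag → ¬ f.IsDiag → w e = w f → e = f) ∧
      G.edgeSet ⊆ Mk w k := by
  classical
  obtain ⟨l, hnd, hedges, hcon⟩ := hG
  have hinj : ∀ e f : Sym2 V, ¬ e.IsDiag → ¬ f.IsDiag →
      ((wfun l e : ℝ)) = ((wfun l f : ℝ)) → e = f := by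
    intro e f _ _ heq
    exact wfun_inj l (by exact_mod_cast heq)
  refine ⟨fun f => (wfun l f : ℝ), ?_, hinj, ?_⟩
  · intro e _
    show (0:ℝ) < (wfun l e : ℝ)
    exact_mod_cast Nat.lt_of_lt_of_le Nat.zero_lt_one (wfun_pos l e)
  · intro e he
    have hel : e ∈ l := by
      have h0 : e ∈ (↑l.toFinset : Set (Sym2 V)) := hedges ▸ he
      simpa using h0
    induction e using Sym2.ind with
    | _ u v =>
      have hadjuv : G.Adj u v := G.mem_edgeSet.mp he
      have huv : u ≠ v := hadjuv.ne
      have hi : l.idxOf s(u,v) < l.length := List.idxOf_lt_length_iff.mpr hel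
      have hget : l.get ⟨l.idxOf s(u,v), hi⟩ = s(u,v) := by
        rw [List.get_eq_getElem]; exact List.getElem_idxOf hi
      have hnopaths := hcon (l.idxOf s(u,v)) hi u v hget
      set i := l.idxOf s(u,v) with hidef
      set L := SimpleGraph.fromEdgeSet (↑(l.take i).toFinset : Set (Sym2 V)) with hLdef
      have hLadj : ¬ L.Adj u v := by
        rw [hLdef, fromEdgeSet_adj]
        rintro ⟨hmem, -⟩
        rw [Finset.mem_coe, List.mem_toFinset] at hmem
        obtain ⟨j, hj, hji⟩ := List.mem_iff_getElem.mp hmem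
        rw [List.getElem_take] at hji
        have hjlen : j < l.length := lt_of_lt_of_le hj (by simp)
        have hji' : l[j] = l[i]'hi := by
          rw [hji]
          exact (List.getElem_idxOf hi).symm
        have hjeq : j = i := (hnd.getElem_inj_iff).mp hji'
        subst hjeq
        simp at hj
      obtain ⟨X₀, hX₀k, huX₀, hvX₀, hX₀hits⟩ := exists_separator huv hLadj hnopaths
      have hX₀sub : X₀ ⊆ Finset.univ \ {u, v} := by
        intro z hz
        rw [Finset.mem_sdiff]
        refine ⟨Finset.mem_univ _, ?_⟩
        rw [Finset.mem_insert, Finset.mem_singleton]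
        rintro (rfl | rfl)
        · exact huX₀ hz
        · exact hvX₀ hz
      have hcardV : k + 1 ≤ Fintype.card V := by
        have := Fintype.card_pos_iff.mpr ⟨u⟩
        omega
      have hpad : k - 1 ≤ (Finset.univ \ ({u, v} : Finset V)).card := by
        rw [Finset.card_sdiff_of_subset (Finset.subset_univ _), Finset.card_univ]
        have h2 : ({u, v} : Finset V).card = 2 := Finset.card_pair huv
        omega
      obtain ⟨X, hX₀X, hXsub, hXcard⟩ :=
        Finset.exists_subsuperset_card_eq hX₀sub (by omega) hpad
      refine ⟨X, hXcard, ?_⟩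
      set S := Finset.univ \ X with hSdef
      have hXuv : u ∉ X ∧ v ∉ X := by
        constructor <;> intro hmem <;>
          · have := hXsub hmem
            rw [Finset.mem_sdiff] at this
            simp at this
      have huS : u ∈ S := by rw [hSdef, Finset.mem_sdiff]; exact ⟨Finset.mem_univ _, hXuv.1⟩
      have hvS : v ∈ S := by rw [hSdef, Finset.mem_sdiff]; exact ⟨Finset.mem_univ _, hXuv.2⟩
      set SEP : Set (Sym2 V) := {f : Sym2 V | f ∈ (l.take i).toFinset ∧ ∀ z ∈ f, z ∈ S}
        with hSEPdef
      set A : Finset V := S.filter (fun z => (SimpleGraph.fromEdgeSet SEP).Reachable u z)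
        with hAdef
      have hAu : u ∈ A := by
        rw [hAdef]; exact Finset.mem_filter.mpr ⟨huS, Reachable.refl _⟩
      have hAv : v ∉ A := by
        rw [hAdef]
        intro hv
        obtain ⟨wlk⟩ := (Finset.mem_filter.mp hv).2
        have hle : SimpleGraph.fromEdgeSet SEP ≤ L := by
          rw [hLdef]
          apply fromEdgeSet_mono
          intro f hf
          exact hf.1
        obtain ⟨t, htX₀, hts⟩ := hX₀hits (wlk.mapLe hle)
        rw [support_mapLe] at hts
        rcases mem_edge_of_mem_support wlk hts with rfl | ⟨f, hf, htf⟩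
        · exact huX₀ htX₀
        · have hfSEP := Walk.edges_subset_edgeSet wlk hf
          rw [edgeSet_fromEdgeSet] at hfSEP
          have htS : t ∈ S := hfSEP.1.2 t htf
          rw [hSdef, Finset.mem_sdiff] at htS
          exact htS.2 (hX₀X htX₀)
      have hclosed : ∀ x y : V, x ∈ A → y ∉ A → x ∈ S → y ∈ S → x ≠ y →
          ¬ ((wfun l s(x,y) : ℝ) < (wfun l s(u,v) : ℝ)) := by
        intro x y hxA hyA hxS hyS hxy hlt
        have hltn : wfun l s(x,y) < wfun l s(u,v) := by exact_mod_cast hlt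
        have hwuv : wfun l s(u,v) = i + 1 := by rw [wfun_mem hel, hidef]
        have hfl : s(x,y) ∈ l := by
          by_contra hfl
          rw [wfun_not_mem hfl, hwuv] at hltn
          omega
        have hlti : l.idxOf s(x,y) < i := by
          rw [wfun_mem hfl, hwuv] at hltn
          omega
        have hmemtake : s(x,y) ∈ l.take i := mem_take_of_indexOf_lt hfl hlti
        have hSEPmem : s(x,y) ∈ SEP := by
          rw [hSEPdef]
          exact ⟨List.mem_toFinset.mpr hmemtake, fun z hz => by
            rcases Sym2.mem_iff.mp hz with rfl | rfl <;> assumption⟩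
        have hadjxy : (SimpleGraph.fromEdgeSet SEP).Adj x y :=
          (fromEdgeSet_adj _).mpr ⟨hSEPmem, hxy⟩
        apply hyA
        rw [hAdef]
        exact Finset.mem_filter.mpr
          ⟨hyS, ((Finset.mem_filter.mp hxA).2).trans hadjxy.reachable⟩
      exact edge_mem_mstEdges hinj huS hvS huv A hAu hAv hclosed
end
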